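/- arXiv:1808.09642 — 11 statements merged into one kernel-verified Lean document; each statement's English description precedes it below -/
import Mathlib

section
/- Let u ∈ ℝ^d with ‖u‖ = 1. Then E[(uᵀX)⁴] = 3 + (ψ − 3)·Σ_{i=1}^d (aᵢᵀu)⁴, where a₁,…,a_d are the columns of A. -/
open MeasureTheory ProbabilityTheory

private lemma integrable_pow_of_mem4 {Ω : Type*} [MeasurableSpace Ω] {μ : Measure Ω}
    [IsProbabilityMeasure μ] {f : Ω → ℝ} (hf : MemLp f 4 μ) {k : ℕ} (hk : k ≤ 4) :
    Integrable (fun ω => f ω ^ k) μ := by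
  have h4 : Integrable (fun ω => ‖f ω‖ ^ (4 : ℝ)) μ :=
    hf.integrable_norm_rpow (by norm_num) (by norm_num)
  have h4' : Integrable (fun ω => |f ω| ^ (4 : ℕ)) μ := by
    have : (fun ω => |f ω| ^ (4 : ℕ)) = fun ω => ‖f ω‖ ^ (4 : ℝ) := by
      funext ω
      rw [Real.norm_eq_abs, ← Real.rpow_natCast]
      norm_num
    rw [this]; exact h4
  refine Integrable.mono' (h4'.add (integrable_const 1)) ?_ ?_
  · exact (hf.aestronglyMeasurable.aemeasurable.pow_const k).aestronglyMeasurable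
  · refine Filter.Eventually.of_forall fun ω => ?_
    have hb : |f ω| ^ k ≤ |f ω| ^ 4 + 1 := by
      rcases le_total (|f ω|) 1 with h | h
      · have h1 : |f ω| ^ k ≤ 1 := pow_le_one₀ (abs_nonneg _) h
        have h2 : (0:ℝ) ≤ |f ω| ^ 4 := pow_nonneg (abs_nonneg _) _
        linarith
      · have h1 : |f ω| ^ k ≤ |f ω| ^ 4 := pow_le_pow_right₀ h hk
        linarith
    calc ‖f ω ^ k‖ = |f ω| ^ k := by rw [Real.norm_eq_abs, abs_pow]
      _ ≤ |f ω| ^ 4 + 1 := hb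

private lemma key_moments {Ω : Type*} [MeasurableSpace Ω] (μ : Measure Ω) [IsProbabilityMeasure μ]
    {d : ℕ} (Y : Fin d → Ω → ℝ) (ψ : ℝ)
    (hmeas : ∀ i, Measurable (Y i))
    (hindep : iIndepFun Y μ)
    (hL4 : ∀ i, MemLp (Y i) 4 μ)
    (hmean : ∀ i, ∫ ω, Y i ω ∂μ = 0)
    (hvar : ∀ i, ∫ ω, (Y i ω) ^ 2 ∂μ = 1)
    (hcube : ∀ i, ∫ ω, (Y i ω) ^ 3 ∂μ = 0)
    (hpsi : ∀ i, ∫ ω, (Y i ω) ^ 4 ∂μ = ψ)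
    (v : Fin d → ℝ) (s : Finset (Fin d)) :
    MemLp (fun ω => ∑ i ∈ s, v i * Y i ω) 4 μ ∧
    (∫ ω, (∑ i ∈ s, v i * Y i ω) ^ 2 ∂μ = ∑ i ∈ s, (v i) ^ 2) ∧
    (∫ ω, (∑ i ∈ s, v i * Y i ω) ^ 4 ∂μ
      = ψ * ∑ i ∈ s, (v i) ^ 4 + 3 * ((∑ i ∈ s, (v i) ^ 2) ^ 2 - ∑ i ∈ s, (v i) ^ 4)) := by
  classical
  induction s using Finset.induction_on with
  | empty =>
      refine ⟨by simpa using memLp_const (0:ℝ), by simp, by simp⟩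
  | @insert a s ha ih =>
      obtain ⟨ihm, ih2, ih4⟩ := ih
      set Za : Ω → ℝ := fun ω => v a * Y a ω with hZa
      set T : Ω → ℝ := fun ω => ∑ i ∈ s, v i * Y i ω with hT
      have hZa4 : MemLp Za 4 μ := (hL4 a).const_mul (v a)
      have hIndep : IndepFun T Za μ := by
        have hcomp : iIndepFun (fun i => (fun x : ℝ => v i * x) ∘ Y i) μ :=
          hindep.comp (fun i (x : ℝ) => v i * x) (fun i => measurable_const_mul (v i))
        have h := hcomp.indepFun_finsetSum_of_notMem
          (fun i => (measurable_const_mul (v i)).comp (hmeas i)) ha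
        have hs : (∑ j ∈ s, ((fun x : ℝ => v j * x) ∘ Y j)) = T := by
          funext ω; simp [hT]
        rwa [hs] at h
      have hpow : ∀ k m : ℕ, IndepFun (fun ω => Za ω ^ k) (fun ω => T ω ^ m) μ := fun k m =>
        hIndep.symm.comp (measurable_id.pow_const k) (measurable_id.pow_const m)
      have hZaI : ∀ k, k ≤ 4 → Integrable (fun ω => Za ω ^ k) μ := fun k hk =>
        integrable_pow_of_mem4 hZa4 hk
      have hTI : ∀ m, m ≤ 4 → Integrable (fun ω => T ω ^ m) μ := fun m hm =>
        integrable_pow_of_mem4 ihm hm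
      have hprodI : ∀ k m : ℕ, k ≤ 4 → m ≤ 4 →
          Integrable (fun ω => Za ω ^ k * T ω ^ m) μ := fun k m hk hm =>
        (hpow k m).integrable_mul (hZaI k hk) (hTI m hm)
      have hmul : ∀ k m : ℕ, k ≤ 4 → m ≤ 4 →
          ∫ ω, Za ω ^ k * T ω ^ m ∂μ = (∫ ω, Za ω ^ k ∂μ) * ∫ ω, T ω ^ m ∂μ :=
        fun k m hk hm => (hpow k m).integral_fun_mul_eq_mul_integral (hZaI k hk).1 (hTI m hm).1
      have hZa_mom : ∀ k : ℕ, ∫ ω, Za ω ^ k ∂μ = v a ^ k * ∫ ω, Y a ω ^ k ∂μ := by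
        intro k
        simp only [hZa, mul_pow]
        exact integral_const_mul _ _
      have hmem : MemLp (fun ω => ∑ i ∈ insert a s, v i * Y i ω) 4 μ := by
        have : (fun ω => ∑ i ∈ insert a s, v i * Y i ω) = Za + T := by
          funext ω; simp [Finset.sum_insert ha, hZa, hT]
        rw [this]
        exact hZa4.add ihm
      refine ⟨hmem, ?_, ?_⟩
      · -- second moment
        have hrw : (fun ω => (∑ i ∈ insert a s, v i * Y i ω) ^ 2)
            = fun ω => Za ω ^ 2 + (2 * (Za ω ^ 1 * T ω ^ 1) + T ω ^ 2) := by
          funext ω; simp only [Finset.sum_insert ha, hZa, hT]; ring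
        have j2 : Integrable (fun ω => 2 * (Za ω ^ 1 * T ω ^ 1)) μ :=
          (hprodI 1 1 (by norm_num) (by norm_num)).const_mul 2
        have j3 : Integrable (fun ω => 2 * (Za ω ^ 1 * T ω ^ 1) + T ω ^ 2) μ :=
          j2.add (hTI 2 (by norm_num))
        calc ∫ ω, (∑ i ∈ insert a s, v i * Y i ω) ^ 2 ∂μ
            = ∫ ω, (Za ω ^ 2 + (2 * (Za ω ^ 1 * T ω ^ 1) + T ω ^ 2)) ∂μ := by rw [hrw]
          _ = (∫ ω, Za ω ^ 2 ∂μ) + ∫ ω, (2 * (Za ω ^ 1 * T ω ^ 1) + T ω ^ 2) ∂μ :=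
              integral_add (hZaI 2 (by norm_num)) j3
          _ = (∫ ω, Za ω ^ 2 ∂μ) + ((∫ ω, 2 * (Za ω ^ 1 * T ω ^ 1) ∂μ) + ∫ ω, T ω ^ 2 ∂μ) := by
              rw [integral_add j2 (hTI 2 (by norm_num))]
          _ = ∑ i ∈ insert a s, v i ^ 2 := by
              rw [integral_const_mul, hmul 1 1 (by norm_num) (by norm_num), hZa_mom 2, hZa_mom 1]
              simp only [pow_one]
              rw [hmean a, hvar a, ih2, Finset.sum_insert ha]
              ring
      · -- fourth moment
        have hrw : (fun ω => (∑ i ∈ insert a s, v i * Y i ω) ^ 4)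
            = fun ω => Za ω ^ 4 + (4 * (Za ω ^ 3 * T ω ^ 1) + (6 * (Za ω ^ 2 * T ω ^ 2)
                + (4 * (Za ω ^ 1 * T ω ^ 3) + T ω ^ 4))) := by
          funext ω; simp only [Finset.sum_insert ha, hZa, hT]; ring
        have i31 := hprodI 3 1 (by norm_num) (by norm_num)
        have i22 := hprodI 2 2 (by norm_num) (by norm_num)
        have i13 := hprodI 1 3 (by norm_num) (by norm_num)
        have k31 : Integrable (fun ω => 4 * (Za ω ^ 3 * T ω ^ 1)) μ := i31.const_mul 4
        have k22 : Integrable (fun ω => 6 * (Za ω ^ 2 * T ω ^ 2)) μ := i22.const_mul 6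
        have k13 : Integrable (fun ω => 4 * (Za ω ^ 1 * T ω ^ 3)) μ := i13.const_mul 4
        have r3 : Integrable (fun ω => 4 * (Za ω ^ 1 * T ω ^ 3) + T ω ^ 4) μ :=
          k13.add (hTI 4 (by norm_num))
        have r2 : Integrable
            (fun ω => 6 * (Za ω ^ 2 * T ω ^ 2) + (4 * (Za ω ^ 1 * T ω ^ 3) + T ω ^ 4)) μ :=
          k22.add r3
        have r1 : Integrable (fun ω => 4 * (Za ω ^ 3 * T ω ^ 1)
            + (6 * (Za ω ^ 2 * T ω ^ 2) + (4 * (Za ω ^ 1 * T ω ^ 3) + T ω ^ 4))) μ :=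
          k31.add r2
        calc ∫ ω, (∑ i ∈ insert a s, v i * Y i ω) ^ 4 ∂μ
            = ∫ ω, (Za ω ^ 4 + (4 * (Za ω ^ 3 * T ω ^ 1) + (6 * (Za ω ^ 2 * T ω ^ 2)
                + (4 * (Za ω ^ 1 * T ω ^ 3) + T ω ^ 4)))) ∂μ := by rw [hrw]
          _ = (∫ ω, Za ω ^ 4 ∂μ) + ((∫ ω, 4 * (Za ω ^ 3 * T ω ^ 1) ∂μ)
                + ((∫ ω, 6 * (Za ω ^ 2 * T ω ^ 2) ∂μ)
                + ((∫ ω, 4 * (Za ω ^ 1 * T ω ^ 3) ∂μ) + ∫ ω, T ω ^ 4 ∂μ))) := by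
              rw [integral_add (hZaI 4 (by norm_num)) r1, integral_add k31 r2,
                integral_add k22 r3, integral_add k13 (hTI 4 (by norm_num))]
          _ = ψ * ∑ i ∈ insert a s, v i ^ 4
                + 3 * ((∑ i ∈ insert a s, v i ^ 2) ^ 2 - ∑ i ∈ insert a s, v i ^ 4) := by
              rw [integral_const_mul, integral_const_mul, integral_const_mul]
              rw [hmul 3 1 (by norm_num) (by norm_num), hmul 2 2 (by norm_num) (by norm_num),
                hmul 1 3 (by norm_num) (by norm_num)]
              rw [hZa_mom 4, hZa_mom 3, hZa_mom 2, hZa_mom 1]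
              simp only [pow_one]
              rw [hmean a, hvar a, hcube a, hpsi a, ih2, ih4, Finset.sum_insert ha,
                Finset.sum_insert ha]
              ring

/-- Let `A` be an orthogonal matrix with columns `a₁,…,a_d`, `X = AY` where `Y`
has independent coordinates, symmetric about 0, mean 0, variance 1, identical fourth moments
`ψ`. For any unit vector `u`, `E[(uᵀX)⁴] = 3 + (ψ − 3)·Σᵢ (aᵢᵀu)⁴`. -/
theorem stmt_0 {Ω : Type*} [MeasurableSpace Ω] (μ : Measure Ω) [IsProbabilityMeasure μ]
    {d : ℕ} (Y : Fin d → Ω → ℝ) (ψ : ℝ)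
    (hmeas : ∀ i, Measurable (Y i))
    (hindep : iIndepFun Y μ)
    (hsymm : ∀ i, μ.map (Y i) = μ.map (fun ω => -Y i ω))
    (hL4 : ∀ i, MemLp (Y i) 4 μ)
    (hmean : ∀ i, ∫ ω, Y i ω ∂μ = 0)
    (hvar : ∀ i, ∫ ω, (Y i ω) ^ 2 ∂μ = 1)
    (hpsi : ∀ i, ∫ ω, (Y i ω) ^ 4 ∂μ = ψ)
    (A : Matrix (Fin d) (Fin d) ℝ) (hA : A.transpose * A = 1)
    (u : EuclideanSpace ℝ (Fin d)) (hu : ‖u‖ = 1) :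
    ∫ ω, (∑ i, u i * A.mulVec (fun j => Y j ω) i) ^ 4 ∂μ
      = 3 + (ψ - 3) * ∑ i, (∑ j, A j i * u j) ^ 4 := by
  classical
  -- third moments vanish by symmetry
  have hcube : ∀ i, ∫ ω, (Y i ω) ^ 3 ∂μ = 0 := by
    intro i
    have hm3 : Measurable fun y : ℝ => y ^ 3 := measurable_id.pow_const 3
    have h1 : ∫ ω, (Y i ω) ^ 3 ∂μ = ∫ y, y ^ 3 ∂(μ.map (Y i)) :=
      (integral_map (hmeas i).aemeasurable hm3.aestronglyMeasurable).symm
    have h2 : ∫ y, y ^ 3 ∂(μ.map (fun ω => -Y i ω)) = ∫ ω, (-Y i ω) ^ 3 ∂μ :=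
      integral_map ((hmeas i).neg).aemeasurable hm3.aestronglyMeasurable
    have h3 : ∫ ω, (-Y i ω) ^ 3 ∂μ = -∫ ω, (Y i ω) ^ 3 ∂μ := by
      rw [← integral_neg]
      congr 1; funext ω; ring
    have : ∫ ω, (Y i ω) ^ 3 ∂μ = -∫ ω, (Y i ω) ^ 3 ∂μ :=
      calc ∫ ω, (Y i ω) ^ 3 ∂μ = ∫ y, y ^ 3 ∂(μ.map (Y i)) := h1
        _ = ∫ y, y ^ 3 ∂(μ.map (fun ω => -Y i ω)) := by rw [hsymm i]
        _ = ∫ ω, (-Y i ω) ^ 3 ∂μ := h2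
        _ = -∫ ω, (Y i ω) ^ 3 ∂μ := h3
    linarith
  set v : Fin d → ℝ := fun j => ∑ i, A i j * u i with hv
  have hrew : (fun ω => (∑ i, u i * A.mulVec (fun j => Y j ω) i) ^ 4)
      = fun ω => (∑ j, v j * Y j ω) ^ 4 := by
    funext ω
    congr 1
    simp only [Matrix.mulVec, dotProduct, Finset.mul_sum]
    rw [Finset.sum_comm]
    refine Finset.sum_congr rfl fun j _ => ?_
    rw [hv, Finset.sum_mul]
    refine Finset.sum_congr rfl fun i _ => ?_
    ring
  have hAAt : A * A.transpose = 1 := mul_eq_one_comm.mp hA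
  have hAkey : ∀ i k, ∑ j, A i j * A k j = if i = k then (1:ℝ) else 0 := by
    intro i k
    have := congrFun (congrFun hAAt i) k
    simpa [Matrix.mul_apply, Matrix.transpose_apply, Matrix.one_apply] using this
  have hu2 : ∑ i, (u i) ^ 2 = 1 := by
    have h := hu
    rw [EuclideanSpace.norm_eq] at h
    have hnn : (0:ℝ) ≤ ∑ i, ‖u i‖ ^ 2 := Finset.sum_nonneg fun i _ => sq_nonneg _
    have h2 : ∑ i, ‖u i‖ ^ 2 = 1 := by
      rwa [Real.sqrt_eq_one] at h
    simpa [Real.norm_eq_abs, sq_abs] using h2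
  have hv2 : ∑ j, (v j) ^ 2 = 1 := by
    have step1 : ∀ j, (v j) ^ 2 = ∑ i, ∑ k, (A i j * A k j) * (u i * u k) := by
      intro j
      rw [hv, sq, Finset.sum_mul_sum]
      refine Finset.sum_congr rfl fun i _ => Finset.sum_congr rfl fun k _ => by ring
    calc ∑ j, (v j) ^ 2 = ∑ j, ∑ i, ∑ k, (A i j * A k j) * (u i * u k) := by
          exact Finset.sum_congr rfl fun j _ => step1 j
      _ = ∑ i, ∑ k, ∑ j, (A i j * A k j) * (u i * u k) := by
          rw [Finset.sum_comm]
          exact Finset.sum_congr rfl fun i _ => Finset.sum_comm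
      _ = ∑ i, ∑ k, (∑ j, A i j * A k j) * (u i * u k) := by
          exact Finset.sum_congr rfl fun i _ => Finset.sum_congr rfl fun k _ =>
            (Finset.sum_mul _ _ _).symm
      _ = ∑ i, (u i) ^ 2 := by
          refine Finset.sum_congr rfl fun i _ => ?_
          simp only [hAkey]
          simp [Finset.sum_ite_eq, sq]
      _ = 1 := hu2
  obtain ⟨-, -, h4⟩ := key_moments μ Y ψ hmeas hindep hL4 hmean hvar hcube hpsi v Finset.univ
  rw [show (∫ ω, (∑ i, u i * A.mulVec (fun j => Y j ω) i) ^ 4 ∂μ)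
      = ∫ ω, (∑ j, v j * Y j ω) ^ 4 ∂μ by rw [hrew]]
  rw [h4, hv2]
  have : ∑ i, (∑ j, A j i * u j) ^ 4 = ∑ i, (v i) ^ 4 := by
    refine Finset.sum_congr rfl fun i _ => ?_
    rw [hv]
  rw [this]
  ring
end

section
/- For any v ∈ ℝ^d with ‖v‖ = 1 and any coordinate k ∈ {1,…,d}, E[(vᵀY)³·Y_k − v_k·(vᵀY)⁴] = (ψ − 3)·v_k·(v_k² − Σ_{i=1}^d vᵢ⁴). -/
set_option linter.unusedSectionVars false

open MeasureTheory ProbabilityTheory Finset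
open scoped ENNReal

section Aux

variable {Ω : Type*} [MeasurableSpace Ω] {μ : Measure Ω} [IsProbabilityMeasure μ]
  {d : ℕ} {Y : Fin d → Ω → ℝ}

lemma aux_pow_integrable {f : Ω → ℝ} (hf : MemLp f 4 μ) (hfm : Measurable f)
    {n : ℕ} (hn : n ≤ 4) : Integrable (fun ω => f ω ^ n) μ := by
  rcases Nat.eq_zero_or_pos n with h | h
  · simp only [h, pow_zero]; exact integrable_const 1
  · have hfn : MemLp f (n : ℝ≥0∞) μ := by
      refine hf.mono_exponent ?_
      exact_mod_cast hn
    have h1 : Integrable (fun ω => ‖f ω‖ ^ ((n : ℝ≥0∞).toReal)) μ :=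
      hfn.integrable_norm_rpow (by exact_mod_cast h.ne') (by simp)
    refine h1.mono' ((hfm.pow_const n).aestronglyMeasurable) ?_
    filter_upwards with ω
    simp [abs_pow, ENNReal.toReal_natCast, Real.rpow_natCast, abs_nonneg]

lemma aux_T_meas (hmeas : ∀ i, Measurable (Y i)) (w : Fin d → ℝ) (s : Finset (Fin d)) :
    Measurable (fun ω => ∑ i ∈ s, w i * Y i ω) :=
  Finset.measurable_sum s (fun i _ => (hmeas i).const_mul (w i))

lemma aux_T_memlp (hL4 : ∀ i, MemLp (Y i) 4 μ) (w : Fin d → ℝ) (s : Finset (Fin d)) :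
    MemLp (fun ω => ∑ i ∈ s, w i * Y i ω) 4 μ := by
  have := memLp_finset_sum s (f := fun i ω => w i * Y i ω) (p := 4) (μ := μ)
    (fun i _ => (hL4 i).const_mul (w i))
  exact this

lemma aux_indep (hmeas : ∀ i, Measurable (Y i))
    (hindep : iIndepFun Y μ) (w : Fin d → ℝ)
    {s : Finset (Fin d)} {a : Fin d} (ha : a ∉ s) :
    IndepFun (Y a) (fun ω => ∑ i ∈ s, w i * Y i ω) μ := by
  classical
  set g : Fin d → ℝ → ℝ := fun i x => if i = a then x else w i * x with hg
  have hgm : ∀ i, Measurable (g i) := by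
    intro i
    by_cases h : i = a <;> simp only [hg, h, if_true, if_false] <;>
      [exact measurable_id; exact (measurable_id.const_mul _)]
  have h2 := (hindep.comp g hgm).indepFun_finset_sum_of_notMem
    (fun i => (hgm i).comp (hmeas i)) ha
  have e1 : (∑ j ∈ s, (g j ∘ Y j)) = fun ω => ∑ i ∈ s, w i * Y i ω := by
    funext ω
    rw [Finset.sum_apply]
    refine Finset.sum_congr rfl (fun j hj => ?_)
    have : j ≠ a := fun h => ha (h ▸ hj)
    simp [hg, this, Function.comp]
  have e2 : (g a ∘ Y a) = Y a := by funext ω; simp [hg, Function.comp]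
  rw [e1, e2] at h2
  exact h2.symm

lemma aux_mono (hmeas : ∀ i, Measurable (Y i))
    (hindep : iIndepFun Y μ)
    (hL4 : ∀ i, MemLp (Y i) 4 μ) (w : Fin d → ℝ)
    {s : Finset (Fin d)} {a : Fin d} (ha : a ∉ s) {j m : ℕ}
    (hj : j ≤ 4) (hm : m ≤ 4) :
    Integrable (fun ω => Y a ω ^ j * (∑ i ∈ s, w i * Y i ω) ^ m) μ ∧
    ∫ ω, Y a ω ^ j * (∑ i ∈ s, w i * Y i ω) ^ m ∂μ =
      (∫ ω, Y a ω ^ j ∂μ) * ∫ ω, (∑ i ∈ s, w i * Y i ω) ^ m ∂μ := by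
  have hT := aux_T_memlp hL4 w s
  have hTm := aux_T_meas hmeas w s
  have hI := (aux_indep hmeas hindep w ha).comp
    (measurable_id.pow_const j) (measurable_id.pow_const m)
  constructor
  · exact hI.integrable_mul (aux_pow_integrable (hL4 a) (hmeas a) hj)
      (aux_pow_integrable hT hTm hm)
  · exact hI.integral_mul_eq_mul_integral ((hmeas a).pow_const j).aestronglyMeasurable
      (hTm.pow_const m).aestronglyMeasurable

lemma aux_T_mean (hL4 : ∀ i, MemLp (Y i) 4 μ)
    (hmean : ∀ i, ∫ ω, Y i ω ∂μ = 0) (w : Fin d → ℝ) (s : Finset (Fin d)) :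
    ∫ ω, (∑ i ∈ s, w i * Y i ω) ∂μ = 0 := by
  rw [integral_finset_sum s
    (fun i _ => (((hL4 i).integrable (by norm_num)).const_mul (w i)))]
  simp [integral_const_mul, hmean]

end Aux

section Main

variable {Ω : Type*} [MeasurableSpace Ω] {μ : Measure Ω} [IsProbabilityMeasure μ]
  {d : ℕ} {Y : Fin d → Ω → ℝ}

lemma aux_sq (hmeas : ∀ i, Measurable (Y i))
    (hindep : iIndepFun Y μ)
    (hL4 : ∀ i, MemLp (Y i) 4 μ)
    (hmean : ∀ i, ∫ ω, Y i ω ∂μ = 0)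
    (hvar : ∀ i, ∫ ω, (Y i ω) ^ 2 ∂μ = 1)
    (w : Fin d → ℝ) (s : Finset (Fin d)) :
    ∫ ω, (∑ i ∈ s, w i * Y i ω) ^ 2 ∂μ = ∑ i ∈ s, w i ^ 2 := by
  classical
  induction s using Finset.induction_on with
  | empty => simp
  | @insert a s ha ih =>
    simp only [Finset.sum_insert ha]
    have M20 := aux_mono hmeas hindep hL4 w ha (j := 2) (m := 0) (by norm_num) (by norm_num)
    have M11 := aux_mono hmeas hindep hL4 w ha (j := 1) (m := 1) (by norm_num) (by norm_num)
    have M02 := aux_mono hmeas hindep hL4 w ha (j := 0) (m := 2) (by norm_num) (by norm_num)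
    have hrw : (fun ω => (w a * Y a ω + ∑ i ∈ s, w i * Y i ω) ^ 2) =
        (fun ω => (w a ^ 2) * (Y a ω ^ 2 * (∑ i ∈ s, w i * Y i ω) ^ 0)
          + ((2 * w a) * (Y a ω ^ 1 * (∑ i ∈ s, w i * Y i ω) ^ 1)
          + (Y a ω ^ 0 * (∑ i ∈ s, w i * Y i ω) ^ 2))) := by
      funext ω; ring
    rw [show (∫ ω, (w a * Y a ω + ∑ i ∈ s, w i * Y i ω) ^ 2 ∂μ) =
        ∫ ω, ((w a ^ 2) * (Y a ω ^ 2 * (∑ i ∈ s, w i * Y i ω) ^ 0)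
          + ((2 * w a) * (Y a ω ^ 1 * (∑ i ∈ s, w i * Y i ω) ^ 1)
          + (Y a ω ^ 0 * (∑ i ∈ s, w i * Y i ω) ^ 2))) ∂μ from by rw [← hrw]]
    have IA : Integrable (fun ω => (w a ^ 2) * (Y a ω ^ 2 * (∑ i ∈ s, w i * Y i ω) ^ 0)) μ :=
      M20.1.const_mul _
    have IB : Integrable (fun ω => (2 * w a) * (Y a ω ^ 1 * (∑ i ∈ s, w i * Y i ω) ^ 1)) μ :=
      M11.1.const_mul _
    have IC : Integrable (fun ω => Y a ω ^ 0 * (∑ i ∈ s, w i * Y i ω) ^ 2) μ := M02.1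
    have IBC : Integrable (fun ω => (2 * w a) * (Y a ω ^ 1 * (∑ i ∈ s, w i * Y i ω) ^ 1)
        + (Y a ω ^ 0 * (∑ i ∈ s, w i * Y i ω) ^ 2)) μ := by exact IB.add IC
    rw [integral_add IA IBC, integral_add IB IC,
        integral_const_mul, integral_const_mul, M20.2, M11.2, M02.2, ih]
    simp only [pow_zero, pow_one, integral_const, measure_univ, ENNReal.toReal_one, probReal_univ, smul_eq_mul,
      mul_one, one_mul, hvar a, hmean a]
    ring

lemma aux_quartic (hmeas : ∀ i, Measurable (Y i))
    (hindep : iIndepFun Y μ)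
    (hL4 : ∀ i, MemLp (Y i) 4 μ)
    (hmean : ∀ i, ∫ ω, Y i ω ∂μ = 0)
    (hvar : ∀ i, ∫ ω, (Y i ω) ^ 2 ∂μ = 1)
    {ψ : ℝ} (hpsi : ∀ i, ∫ ω, (Y i ω) ^ 4 ∂μ = ψ)
    (w : Fin d → ℝ) (s : Finset (Fin d)) :
    ∫ ω, (∑ i ∈ s, w i * Y i ω) ^ 4 ∂μ
      = ψ * (∑ i ∈ s, w i ^ 4) + 3 * ((∑ i ∈ s, w i ^ 2) ^ 2 - ∑ i ∈ s, w i ^ 4) := by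
  classical
  induction s using Finset.induction_on with
  | empty => simp
  | @insert a s ha ih =>
    simp only [Finset.sum_insert ha]
    have M40 := aux_mono hmeas hindep hL4 w ha (j := 4) (m := 0) (by norm_num) (by norm_num)
    have M31 := aux_mono hmeas hindep hL4 w ha (j := 3) (m := 1) (by norm_num) (by norm_num)
    have M22 := aux_mono hmeas hindep hL4 w ha (j := 2) (m := 2) (by norm_num) (by norm_num)
    have M13 := aux_mono hmeas hindep hL4 w ha (j := 1) (m := 3) (by norm_num) (by norm_num)
    have M04 := aux_mono hmeas hindep hL4 w ha (j := 0) (m := 4) (by norm_num) (by norm_num)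
    have hrw : (fun ω => (w a * Y a ω + ∑ i ∈ s, w i * Y i ω) ^ 4) =
        (fun ω => (w a ^ 4) * (Y a ω ^ 4 * (∑ i ∈ s, w i * Y i ω) ^ 0)
          + ((4 * w a ^ 3) * (Y a ω ^ 3 * (∑ i ∈ s, w i * Y i ω) ^ 1)
          + ((6 * w a ^ 2) * (Y a ω ^ 2 * (∑ i ∈ s, w i * Y i ω) ^ 2)
          + ((4 * w a) * (Y a ω ^ 1 * (∑ i ∈ s, w i * Y i ω) ^ 3)
          + (Y a ω ^ 0 * (∑ i ∈ s, w i * Y i ω) ^ 4))))) := by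
      funext ω; ring
    rw [show (∫ ω, (w a * Y a ω + ∑ i ∈ s, w i * Y i ω) ^ 4 ∂μ) =
        ∫ ω, ((w a ^ 4) * (Y a ω ^ 4 * (∑ i ∈ s, w i * Y i ω) ^ 0)
          + ((4 * w a ^ 3) * (Y a ω ^ 3 * (∑ i ∈ s, w i * Y i ω) ^ 1)
          + ((6 * w a ^ 2) * (Y a ω ^ 2 * (∑ i ∈ s, w i * Y i ω) ^ 2)
          + ((4 * w a) * (Y a ω ^ 1 * (∑ i ∈ s, w i * Y i ω) ^ 3)
          + (Y a ω ^ 0 * (∑ i ∈ s, w i * Y i ω) ^ 4))))) ∂μ from by rw [← hrw]]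
    have I4 : Integrable (fun ω => (w a ^ 4) * (Y a ω ^ 4 * (∑ i ∈ s, w i * Y i ω) ^ 0)) μ :=
      M40.1.const_mul _
    have I3 : Integrable (fun ω => (4 * w a ^ 3) * (Y a ω ^ 3 * (∑ i ∈ s, w i * Y i ω) ^ 1)) μ :=
      M31.1.const_mul _
    have I2 : Integrable (fun ω => (6 * w a ^ 2) * (Y a ω ^ 2 * (∑ i ∈ s, w i * Y i ω) ^ 2)) μ :=
      M22.1.const_mul _
    have I1 : Integrable (fun ω => (4 * w a) * (Y a ω ^ 1 * (∑ i ∈ s, w i * Y i ω) ^ 3)) μ :=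
      M13.1.const_mul _
    have I0 : Integrable (fun ω => Y a ω ^ 0 * (∑ i ∈ s, w i * Y i ω) ^ 4) μ := M04.1
    have I10 : Integrable (fun ω => (4 * w a) * (Y a ω ^ 1 * (∑ i ∈ s, w i * Y i ω) ^ 3)
        + (Y a ω ^ 0 * (∑ i ∈ s, w i * Y i ω) ^ 4)) μ := by exact I1.add I0
    have I210 : Integrable (fun ω => (6 * w a ^ 2) * (Y a ω ^ 2 * (∑ i ∈ s, w i * Y i ω) ^ 2)
        + ((4 * w a) * (Y a ω ^ 1 * (∑ i ∈ s, w i * Y i ω) ^ 3)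
        + (Y a ω ^ 0 * (∑ i ∈ s, w i * Y i ω) ^ 4))) μ := by exact I2.add I10
    have I3210 : Integrable (fun ω => (4 * w a ^ 3) * (Y a ω ^ 3 * (∑ i ∈ s, w i * Y i ω) ^ 1)
        + ((6 * w a ^ 2) * (Y a ω ^ 2 * (∑ i ∈ s, w i * Y i ω) ^ 2)
        + ((4 * w a) * (Y a ω ^ 1 * (∑ i ∈ s, w i * Y i ω) ^ 3)
        + (Y a ω ^ 0 * (∑ i ∈ s, w i * Y i ω) ^ 4)))) μ := by exact I3.add I210
    rw [integral_add I4 I3210, integral_add I3 I210, integral_add I2 I10, integral_add I1 I0,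
        integral_const_mul, integral_const_mul, integral_const_mul, integral_const_mul,
        M40.2, M31.2, M22.2, M13.2, M04.2, ih]
    simp only [pow_zero, pow_one, integral_const, measure_univ, ENNReal.toReal_one, probReal_univ, smul_eq_mul,
      mul_one, one_mul, hvar a, hmean a, hpsi a,
      aux_T_mean hL4 hmean w s, aux_sq hmeas hindep hL4 hmean hvar w s]
    ring

end Main

/-- For any unit vector `v ∈ ℝ^d` and coordinate `k`,
`E[(vᵀY)³·Y_k − v_k·(vᵀY)⁴] = (ψ − 3)·v_k·(v_k² − Σᵢ vᵢ⁴)`, where `Y` has independent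
coordinates, symmetric about 0, mean 0, variance 1, identical fourth moments `ψ`. -/
theorem stmt_4 {Ω : Type*} [MeasurableSpace Ω] (μ : Measure Ω) [IsProbabilityMeasure μ]
    {d : ℕ} (Y : Fin d → Ω → ℝ) (ψ : ℝ)
    (hmeas : ∀ i, Measurable (Y i))
    (hindep : iIndepFun Y μ)
    (hsymm : ∀ i, μ.map (Y i) = μ.map (fun ω => -Y i ω))
    (hL4 : ∀ i, MemLp (Y i) 4 μ)
    (hmean : ∀ i, ∫ ω, Y i ω ∂μ = 0)
    (hvar : ∀ i, ∫ ω, (Y i ω) ^ 2 ∂μ = 1)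
    (hpsi : ∀ i, ∫ ω, (Y i ω) ^ 4 ∂μ = ψ)
    (v : EuclideanSpace ℝ (Fin d)) (hv : ‖v‖ = 1) (k : Fin d) :
    ∫ ω, ((∑ i, v i * Y i ω) ^ 3 * Y k ω - v k * (∑ i, v i * Y i ω) ^ 4) ∂μ
      = (ψ - 3) * v k * ((v k) ^ 2 - ∑ i, (v i) ^ 4) := by
  classical
  have hq1 : ∑ i, (v i) ^ 2 = 1 := by
    have h2 : Real.sqrt (∑ i, ‖v i‖ ^ 2) = 1 := by rw [← EuclideanSpace.norm_eq]; exact hv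
    have h3 : (∑ i, ‖v i‖ ^ 2) = 1 := by
      have hnn : (0:ℝ) ≤ ∑ i, ‖v i‖ ^ 2 :=
        Finset.sum_nonneg fun i _ => sq_nonneg _
      nlinarith [Real.sq_sqrt hnn, Real.sqrt_nonneg (∑ i, ‖v i‖ ^ 2)]
    simpa [Real.norm_eq_abs, sq_abs] using h3
  have hks : k ∉ Finset.univ.erase k := Finset.notMem_erase k _
  have M40 := aux_mono hmeas hindep hL4 (fun i => v i) hks (j := 4) (m := 0) (by norm_num) (by norm_num)
  have M31 := aux_mono hmeas hindep hL4 (fun i => v i) hks (j := 3) (m := 1) (by norm_num) (by norm_num)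
  have M22 := aux_mono hmeas hindep hL4 (fun i => v i) hks (j := 2) (m := 2) (by norm_num) (by norm_num)
  have M13 := aux_mono hmeas hindep hL4 (fun i => v i) hks (j := 1) (m := 3) (by norm_num) (by norm_num)
  have M04 := aux_mono hmeas hindep hL4 (fun i => v i) hks (j := 0) (m := 4) (by norm_num) (by norm_num)
  have hsum : ∀ ω, (∑ i, v i * Y i ω)
      = v k * Y k ω + ∑ i ∈ Finset.univ.erase k, v i * Y i ω :=
    fun ω => (Finset.add_sum_erase _ _ (Finset.mem_univ k)).symm
  have hrw : (fun ω => ((∑ i, v i * Y i ω) ^ 3 * Y k ω - v k * (∑ i, v i * Y i ω) ^ 4)) =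
      (fun ω => (v k ^ 3 - v k ^ 5) * (Y k ω ^ 4 * (∑ i ∈ Finset.univ.erase k, v i * Y i ω) ^ 0)
        + ((3 * v k ^ 2 - 4 * v k ^ 4) * (Y k ω ^ 3 * (∑ i ∈ Finset.univ.erase k, v i * Y i ω) ^ 1)
        + ((3 * v k - 6 * v k ^ 3) * (Y k ω ^ 2 * (∑ i ∈ Finset.univ.erase k, v i * Y i ω) ^ 2)
        + ((1 - 4 * v k ^ 2) * (Y k ω ^ 1 * (∑ i ∈ Finset.univ.erase k, v i * Y i ω) ^ 3)
        + (-(v k)) * (Y k ω ^ 0 * (∑ i ∈ Finset.univ.erase k, v i * Y i ω) ^ 4))))) := by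
    funext ω; rw [hsum ω]; ring
  have I4 : Integrable (fun ω => (v k ^ 3 - v k ^ 5)
      * (Y k ω ^ 4 * (∑ i ∈ Finset.univ.erase k, v i * Y i ω) ^ 0)) μ := M40.1.const_mul _
  have I3 : Integrable (fun ω => (3 * v k ^ 2 - 4 * v k ^ 4)
      * (Y k ω ^ 3 * (∑ i ∈ Finset.univ.erase k, v i * Y i ω) ^ 1)) μ := M31.1.const_mul _
  have I2 : Integrable (fun ω => (3 * v k - 6 * v k ^ 3)
      * (Y k ω ^ 2 * (∑ i ∈ Finset.univ.erase k, v i * Y i ω) ^ 2)) μ := M22.1.const_mul _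
  have I1 : Integrable (fun ω => (1 - 4 * v k ^ 2)
      * (Y k ω ^ 1 * (∑ i ∈ Finset.univ.erase k, v i * Y i ω) ^ 3)) μ := M13.1.const_mul _
  have I0 : Integrable (fun ω => (-(v k))
      * (Y k ω ^ 0 * (∑ i ∈ Finset.univ.erase k, v i * Y i ω) ^ 4)) μ := M04.1.const_mul _
  have I10 : Integrable (fun ω => (1 - 4 * v k ^ 2)
      * (Y k ω ^ 1 * (∑ i ∈ Finset.univ.erase k, v i * Y i ω) ^ 3)
      + (-(v k)) * (Y k ω ^ 0 * (∑ i ∈ Finset.univ.erase k, v i * Y i ω) ^ 4)) μ := by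
    exact I1.add I0
  have I210 : Integrable (fun ω => (3 * v k - 6 * v k ^ 3)
      * (Y k ω ^ 2 * (∑ i ∈ Finset.univ.erase k, v i * Y i ω) ^ 2)
      + ((1 - 4 * v k ^ 2) * (Y k ω ^ 1 * (∑ i ∈ Finset.univ.erase k, v i * Y i ω) ^ 3)
      + (-(v k)) * (Y k ω ^ 0 * (∑ i ∈ Finset.univ.erase k, v i * Y i ω) ^ 4))) μ := by
    exact I2.add I10
  have I3210 : Integrable (fun ω => (3 * v k ^ 2 - 4 * v k ^ 4)
      * (Y k ω ^ 3 * (∑ i ∈ Finset.univ.erase k, v i * Y i ω) ^ 1)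
      + ((3 * v k - 6 * v k ^ 3) * (Y k ω ^ 2 * (∑ i ∈ Finset.univ.erase k, v i * Y i ω) ^ 2)
      + ((1 - 4 * v k ^ 2) * (Y k ω ^ 1 * (∑ i ∈ Finset.univ.erase k, v i * Y i ω) ^ 3)
      + (-(v k)) * (Y k ω ^ 0 * (∑ i ∈ Finset.univ.erase k, v i * Y i ω) ^ 4)))) μ := by
    exact I3.add I210
  have hQ : ∑ i ∈ Finset.univ.erase k, (v i) ^ 2 = 1 - v k ^ 2 := by
    rw [← hq1, ← Finset.add_sum_erase _ (fun i => (v i) ^ 2) (Finset.mem_univ k)]; ring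
  have hB : ∑ i ∈ Finset.univ.erase k, (v i) ^ 4 = (∑ i, (v i) ^ 4) - v k ^ 4 := by
    rw [← Finset.add_sum_erase _ (fun i => (v i) ^ 4) (Finset.mem_univ k)]; ring
  rw [show (∫ ω, ((∑ i, v i * Y i ω) ^ 3 * Y k ω - v k * (∑ i, v i * Y i ω) ^ 4) ∂μ)
      = ∫ ω, ((v k ^ 3 - v k ^ 5) * (Y k ω ^ 4 * (∑ i ∈ Finset.univ.erase k, v i * Y i ω) ^ 0)
        + ((3 * v k ^ 2 - 4 * v k ^ 4) * (Y k ω ^ 3 * (∑ i ∈ Finset.univ.erase k, v i * Y i ω) ^ 1)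
        + ((3 * v k - 6 * v k ^ 3) * (Y k ω ^ 2 * (∑ i ∈ Finset.univ.erase k, v i * Y i ω) ^ 2)
        + ((1 - 4 * v k ^ 2) * (Y k ω ^ 1 * (∑ i ∈ Finset.univ.erase k, v i * Y i ω) ^ 3)
        + (-(v k)) * (Y k ω ^ 0 * (∑ i ∈ Finset.univ.erase k, v i * Y i ω) ^ 4))))) ∂μ
      from by rw [← hrw]]
  rw [integral_add I4 I3210, integral_add I3 I210, integral_add I2 I10, integral_add I1 I0,
      integral_const_mul, integral_const_mul, integral_const_mul, integral_const_mul,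
      integral_const_mul, M40.2, M31.2, M22.2, M13.2, M04.2]
  simp only [pow_zero, pow_one, integral_const, measure_univ, ENNReal.toReal_one, probReal_univ, smul_eq_mul,
    mul_one, one_mul, hpsi k, hvar k, hmean k,
    aux_T_mean hL4 hmean (fun i => v i) (Finset.univ.erase k),
    aux_sq hmeas hindep hL4 hmean hvar (fun i => v i) (Finset.univ.erase k),
    aux_quartic hmeas hindep hL4 hmean hvar hpsi (fun i => v i) (Finset.univ.erase k)]
  rw [hQ, hB]
  ring
end

section
/- Suppose B²β ≤ 2/3. For every v ∈ ℝ^d with ‖v‖ = 1, every y ∈ ℝ^d with ‖y‖² ≤ B, and every coordinate k, the k-th coordinate of v⁺ := (v + β(vᵀy)³y)/‖v + β(vᵀy)³y‖ satisfies |v⁺_k − v_k − β·((vᵀy)³·y_k − v_k·(vᵀy)⁴)| ≤ 9B⁴β². -/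
lemma coord_sq_le {d : ℕ} (x : EuclideanSpace ℝ (Fin d)) (k : Fin d) :
    (x k) ^ 2 ≤ ‖x‖ ^ 2 := by
  rw [EuclideanSpace.norm_eq x, Real.sq_sqrt (by positivity)]
  calc (x k)^2 = ‖x k‖^2 := by rw [Real.norm_eq_abs, sq_abs]
  _ ≤ ∑ i, ‖x i‖^2 :=
    Finset.single_le_sum (f := fun i => ‖x i‖^2) (fun i _ => by positivity) (Finset.mem_univ k)

lemma hA1 (a c M u : ℝ) (ha : 0 ≤ a) (ha2 : a ≤ 2/3) (hcM : c ≤ M)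
    (ha2c : a ^ 2 ≤ c) (hlo : 1 + a ≤ u) : 1 - u + u * a ≤ M := by
  nlinarith [mul_le_mul_of_nonneg_right hlo (by linarith : (0:ℝ) ≤ 1 - a)]

lemma hA2 (a c M u : ℝ) (ha : 0 ≤ a) (ha2 : a ≤ 2/3) (hc : 0 ≤ c) (hcM : c ≤ M)
    (hhi : u ≤ 1 + a + c/2) : -M ≤ 1 - u + u * a := by
  nlinarith [mul_le_mul_of_nonneg_right hhi (by linarith : (0:ℝ) ≤ 1 - a),
    mul_nonneg hc ha, sq_nonneg a]

lemma ulow (a e u : ℝ) (ha : 0 ≤ a) (he : 0 ≤ e) (hu1 : 1 ≤ u)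
    (hu2 : u ^ 2 = 1 + 2 * a + a ^ 2 + e) : 1 + a ≤ u := by
  nlinarith [sq_nonneg (u - (1 + a))]

lemma uhigh (a c u : ℝ) (hu2 : u ^ 2 = 1 + 2 * a + c) : u ≤ 1 + a + c / 2 := by
  nlinarith [sq_nonneg (u - 1)]

set_option maxHeartbeats 1000000 in
lemma aux_real (β B s t vk yk u : ℝ) (hβ : 0 < β) (hB : 0 < B)
    (hcond : B ^ 2 * β ≤ 2 / 3)
    (hst : s ^ 2 ≤ t) (htB : t ≤ B) (ht0 : 0 ≤ t)
    (hu2 : u ^ 2 = 1 + 2 * β * s ^ 4 + β ^ 2 * s ^ 6 * t) (hu1 : 1 ≤ u)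
    (hwk : |vk + β * s ^ 3 * yk| ≤ u) (hyk : yk ^ 2 ≤ t) :
    |(vk + β * s ^ 3 * yk) / u - vk - β * (s ^ 3 * yk - vk * s ^ 4)| ≤ 9 * B ^ 4 * β ^ 2 := by
  set wk := vk + β * s ^ 3 * yk with hw
  have hu0 : 0 < u := lt_of_lt_of_le one_pos hu1
  have hs4 : s ^ 4 ≤ B ^ 2 := by nlinarith [sq_nonneg s]
  have hs6t : s ^ 6 * t ≤ B ^ 4 := by
    calc s^6*t = (s^2)^3*t := by ring
    _ ≤ t^3*t := by nlinarith [pow_le_pow_left₀ (sq_nonneg s) hst 3]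
    _ = t^4 := by ring
    _ ≤ B^4 := pow_le_pow_left₀ ht0 htB 4
  have hbs4 : β * s ^ 4 ≤ 2 / 3 := by nlinarith
  have hs8 : s ^ 8 ≤ s ^ 6 * t := by nlinarith [pow_nonneg (sq_nonneg s) 3]
  have hcM : β ^ 2 * s ^ 6 * t ≤ β ^ 2 * B ^ 4 := by nlinarith [sq_nonneg β]
  have ha0 : 0 ≤ β * s ^ 4 := by positivity
  have hc0 : 0 ≤ β ^ 2 * s ^ 6 * t := by
    have : 0 ≤ β ^ 2 * (s ^ 6 * t) := mul_nonneg (sq_nonneg β) (by nlinarith [pow_nonneg (sq_nonneg s) 3])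
    linarith [this, (by ring : β ^ 2 * (s ^ 6 * t) = β ^ 2 * s ^ 6 * t)]
  have hlo : 1 + β * s ^ 4 ≤ u := by
    refine ulow (β * s ^ 4) (β ^ 2 * s ^ 6 * t - (β * s ^ 4) ^ 2) u ha0 (by nlinarith [sq_nonneg β]) hu1 (by rw [hu2]; ring)
  have hhi : u ≤ 1 + β * s ^ 4 + β ^ 2 * s ^ 6 * t / 2 :=
    uhigh (β * s ^ 4) (β ^ 2 * s ^ 6 * t) u (by rw [hu2]; ring)
  have eA1 : 1 - u + u * (β * s ^ 4) ≤ β ^ 2 * B ^ 4 :=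
    hA1 (β * s ^ 4) (β ^ 2 * s ^ 6 * t) (β ^ 2 * B ^ 4) u ha0 hbs4 hcM (by nlinarith [sq_nonneg β]) hlo
  have eA2 : -(β ^ 2 * B ^ 4) ≤ 1 - u + u * (β * s ^ 4) :=
    hA2 (β * s ^ 4) (β ^ 2 * s ^ 6 * t) (β ^ 2 * B ^ 4) u ha0 hbs4 hc0 hcM hhi
  have hAabs : |1 - u + u * (β * s ^ 4)| ≤ β ^ 2 * B ^ 4 := abs_le.2 ⟨eA2, eA1⟩
  have e7 : (s ^ 7 * yk) ^ 2 ≤ (B ^ 4) ^ 2 := by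
    calc (s ^ 7 * yk) ^ 2 = (s^2)^7 * yk^2 := by ring
    _ ≤ t^7 * t := mul_le_mul (pow_le_pow_left₀ (sq_nonneg s) hst 7) hyk (sq_nonneg yk) (by positivity)
    _ = t^8 := by ring
    _ ≤ (B^4)^2 := by rw [show ((B:ℝ)^4)^2 = B^8 by ring]; exact pow_le_pow_left₀ ht0 htB 8
  have h7abs : |s ^ 7 * yk| ≤ B ^ 4 := abs_le_of_sq_le_sq e7 (by positivity)
  have key : wk / u - vk - β * (s ^ 3 * yk - vk * s ^ 4)
      = (wk * (1 - u + u * (β * s ^ 4)) - u * β ^ 2 * (s ^ 7 * yk)) / u := by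
    rw [hw]; field_simp; ring
  rw [key, abs_div, abs_of_pos hu0, div_le_iff₀ hu0]
  calc |wk * (1 - u + u * (β * s ^ 4)) - u * β ^ 2 * (s ^ 7 * yk)|
      ≤ |wk * (1 - u + u * (β * s ^ 4))| + |u * β ^ 2 * (s ^ 7 * yk)| := abs_sub _ _
    _ ≤ u * (β ^ 2 * B ^ 4) + u * β ^ 2 * B ^ 4 := by
        refine add_le_add ?_ ?_
        · rw [abs_mul]
          exact mul_le_mul hwk hAabs (abs_nonneg _) hu0.le
        · rw [abs_mul]
          refine mul_le_mul (le_of_eq ?_) h7abs (abs_nonneg _) (by positivity)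
          rw [abs_of_nonneg (by positivity : (0:ℝ) ≤ u * β ^ 2)]
    _ ≤ 9 * B ^ 4 * β ^ 2 * u := by nlinarith [mul_nonneg (mul_nonneg hu0.le (sq_nonneg β)) (le_of_lt (by positivity : (0:ℝ) < B ^ 4))]

/-- Suppose `B²β ≤ 2/3`. For every unit vector `v`, every `y` with `‖y‖² ≤ B`,
and every coordinate `k`, the `k`-th coordinate of the normalized one-step update
`v⁺ = (v + β(vᵀy)³y)/‖v + β(vᵀy)³y‖` satisfies
`|v⁺_k − v_k − β((vᵀy)³y_k − v_k(vᵀy)⁴)| ≤ 9B⁴β²`. -/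
theorem stmt_5 {d : ℕ} (β B : ℝ) (hβ : 0 < β) (hB : 0 < B) (hcond : B ^ 2 * β ≤ 2 / 3)
    (v y : EuclideanSpace ℝ (Fin d)) (hv : ‖v‖ = 1) (hy : ‖y‖ ^ 2 ≤ B) (k : Fin d) :
    |(‖v + (β * (∑ i, v i * y i) ^ 3) • y‖⁻¹ • (v + (β * (∑ i, v i * y i) ^ 3) • y)) k
        - v k - β * ((∑ i, v i * y i) ^ 3 * y k - v k * (∑ i, v i * y i) ^ 4)|
      ≤ 9 * B ^ 4 * β ^ 2 := by
  set s : ℝ := ∑ i, v i * y i with hs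
  have hinner : (inner ℝ v y : ℝ) = s := by
    rw [hs]
    simp [PiLp.inner_apply, RCLike.inner_apply, conj_trivial, mul_comm]
  set w : EuclideanSpace ℝ (Fin d) := v + (β * s ^ 3) • y with hwdef
  set u : ℝ := ‖w‖ with hu
  have hu2 : u ^ 2 = 1 + 2 * β * s ^ 4 + β ^ 2 * s ^ 6 * ‖y‖ ^ 2 := by
    rw [hu, hwdef, norm_add_sq_real, real_inner_smul_right, hinner, norm_smul, hv]
    rw [mul_pow, Real.norm_eq_abs, sq_abs]
    ring
  have hu1 : (1:ℝ) ≤ u := by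
    have h0 : 0 ≤ u := norm_nonneg w
    have t1 : 0 ≤ 2 * β * s ^ 4 := by positivity
    have t2 : 0 ≤ β ^ 2 * s ^ 6 * ‖y‖ ^ 2 := by positivity
    nlinarith [t1, t2, hu2, h0]
  have hst : s ^ 2 ≤ ‖y‖ ^ 2 := by
    have := abs_real_inner_le_norm v y
    rw [hinner, hv, one_mul] at this
    nlinarith [abs_nonneg s, le_abs_self s, neg_abs_le s]
  have hwk : |w k| ≤ u := abs_le_of_sq_le_sq (coord_sq_le w k) (norm_nonneg w)
  have hyk : (y k) ^ 2 ≤ ‖y‖ ^ 2 := coord_sq_le y k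
  have hwk_eq : w k = v k + β * s ^ 3 * (y k) := by
    rw [hwdef]
    simp [PiLp.add_apply, PiLp.smul_apply, smul_eq_mul]
  have happ : (‖w‖⁻¹ • w) k = (v k + β * s ^ 3 * (y k)) / u := by
    rw [← hwk_eq, hu]
    simp [PiLp.smul_apply, smul_eq_mul, div_eq_inv_mul]
  rw [show (‖v + (β * s ^ 3) • y‖⁻¹ • (v + (β * s ^ 3) • y)) = ‖w‖⁻¹ • w from rfl, happ]
  have := aux_real β B s (‖y‖^2) (v k) (y k) u hβ hB hcond hst hy (by positivity) hu2 hu1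
    (by rw [← hwk_eq]; exact hwk) hyk
  exact this
end

section
/- Suppose B²β ≤ 2/3. For every v ∈ ℝ^d with ‖v‖ = 1, every y ∈ ℝ^d with ‖y‖² ≤ B, and every coordinate k, the k-th coordinate of v⁺ := (v + β(vᵀy)³y)/‖v + β(vᵀy)³y‖ satisfies |v⁺_k − v_k| ≤ 8B²β. -/
lemma coord_abs_le_norm {d : ℕ} (x : EuclideanSpace ℝ (Fin d)) (k : Fin d) :
    |x k| ≤ ‖x‖ := by
  have h : |x k| ^ 2 ≤ ‖x‖ ^ 2 := by
    rw [EuclideanSpace.norm_eq, Real.sq_sqrt (by positivity)]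
    simp only [Real.norm_eq_abs]
    exact Finset.single_le_sum (f := fun i => |x i| ^ 2) (fun i _ => sq_nonneg _) (Finset.mem_univ k)
  nlinarith [norm_nonneg x, abs_nonneg (x k)]

/-- Suppose `B²β ≤ 2/3`. For every unit vector `v`, every `y` with `‖y‖² ≤ B`,
and every coordinate `k`, the `k`-th coordinate of the normalized one-step update
`v⁺ = (v + β(vᵀy)³y)/‖v + β(vᵀy)³y‖` satisfies `|v⁺_k − v_k| ≤ 8B²β`. -/
theorem stmt_6 {d : ℕ} (β B : ℝ) (hβ : 0 < β) (hB : 0 < B) (hcond : B ^ 2 * β ≤ 2 / 3)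
    (v y : EuclideanSpace ℝ (Fin d)) (hv : ‖v‖ = 1) (hy : ‖y‖ ^ 2 ≤ B) (k : Fin d) :
    |(‖v + (β * (∑ i, v i * y i) ^ 3) • y‖⁻¹ • (v + (β * (∑ i, v i * y i) ^ 3) • y)) k
        - v k| ≤ 8 * B ^ 2 * β := by
  set s : ℝ := ∑ i, v i * y i with hs
  set c : ℝ := β * s ^ 3 with hcdef
  have hsinner : s = (inner ℝ v y : ℝ) := by
    simp [hs, PiLp.inner_apply, RCLike.inner_apply, conj_trivial, mul_comm]
  have habs : |s| ≤ ‖y‖ := by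
    rw [hsinner]
    calc |(inner ℝ v y : ℝ)| ≤ ‖v‖ * ‖y‖ := abs_real_inner_le_norm v y
    _ = ‖y‖ := by rw [hv, one_mul]
  have hyn : (0:ℝ) ≤ ‖y‖ := norm_nonneg y
  have hcy : |c| * ‖y‖ ≤ B ^ 2 * β := by
    have h1 : |c| * ‖y‖ = β * (|s| ^ 3 * ‖y‖) := by
      rw [hcdef, abs_mul, abs_of_pos hβ, abs_pow]; ring
    have h2 : |s| ^ 3 * ‖y‖ ≤ ‖y‖ ^ 4 := by
      have : |s| ^ 3 ≤ ‖y‖ ^ 3 := pow_le_pow_left₀ (abs_nonneg s) habs 3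
      nlinarith
    have h3 : ‖y‖ ^ 4 ≤ B ^ 2 := by nlinarith
    nlinarith
  set w : EuclideanSpace ℝ (Fin d) := v + c • y with hw
  have hwnorm : |‖w‖ - 1| ≤ B ^ 2 * β := by
    have h := abs_norm_sub_norm_le w v
    have : w - v = c • y := by rw [hw]; abel
    rw [this, norm_smul, hv] at h
    calc |‖w‖ - 1| ≤ ‖c‖ * ‖y‖ := h
    _ ≤ B ^ 2 * β := hcy
  have hwpos : (1:ℝ)/3 ≤ ‖w‖ := by
    have := abs_le.mp hwnorm
    linarith [this.1]
  have hwne : ‖w‖ ≠ 0 := by positivity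
  have hkey : (‖w‖⁻¹ • w) k - v k = ‖w‖⁻¹ * (c * y k + v k * (1 - ‖w‖)) := by
    have hwk : w k = v k + c * y k := by
      simp [hw]
    rw [PiLp.smul_apply, smul_eq_mul, hwk]
    field_simp
    ring
  rw [hkey, abs_mul]
  have hvk : |v k| ≤ 1 := by
    have := coord_abs_le_norm v k; rwa [hv] at this
  have hyk : |y k| ≤ ‖y‖ := coord_abs_le_norm y k
  have hterm : |c * y k + v k * (1 - ‖w‖)| ≤ 2 * (B ^ 2 * β) := by
    calc |c * y k + v k * (1 - ‖w‖)| ≤ |c * y k| + |v k * (1 - ‖w‖)| := abs_add_le _ _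
    _ = |c| * |y k| + |v k| * |1 - ‖w‖| := by rw [abs_mul c, abs_mul (v k)]
    _ ≤ |c| * ‖y‖ + 1 * |‖w‖ - 1| := by
        rw [abs_sub_comm]
        gcongr
    _ ≤ B ^ 2 * β + B ^ 2 * β := by linarith [hcy, hwnorm]
    _ = 2 * (B ^ 2 * β) := by ring
  have hinv : |‖w‖⁻¹| ≤ 3 := by
    rw [abs_of_nonneg (by positivity)]
    rw [inv_le_comm₀ (by linarith) (by norm_num)]
    linarith
  calc |‖w‖⁻¹| * |c * y k + v k * (1 - ‖w‖)| ≤ 3 * (2 * (B ^ 2 * β)) := by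
        apply mul_le_mul hinv hterm (abs_nonneg _) (by norm_num)
  _ ≤ 8 * B ^ 2 * β := by nlinarith
end

section
/- Suppose B²β ≤ 2/3. For every v ∈ ℝ^d with ‖v‖ = 1 and every y ∈ ℝ^d with ‖y‖² ≤ B, the normalizing factor satisfies |‖v + β(vᵀy)³y‖^{−1} − 1 + β(vᵀy)⁴| ≤ (73/18)·B⁴β². -/
open scoped RealInnerProductSpace

/-- Bounds on `a⁻¹` when `a² = 1 + x`. -/
lemma inv_sqrt_bounds (a x : ℝ) (ha : 0 < a) (hax : a ^ 2 = 1 + x)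
    (hx0 : 0 ≤ x) (hx3 : x ≤ 3) :
    1 - x / 2 ≤ a⁻¹ ∧ a⁻¹ ≤ 1 - x / 2 + 3 / 8 * x ^ 2 := by
  have ha1 : 1 ≤ a := by nlinarith
  have hainv : 0 < a⁻¹ := inv_pos.mpr ha
  constructor
  · rcases le_or_gt (1 - x / 2) 0 with h | h
    · linarith
    · rw [show a⁻¹ = 1 / a from (one_div a).symm, le_div_iff₀ ha]
      have hP : 0 ≤ (1 - x / 2) * a := by positivity
      nlinarith [sq_nonneg ((1 - x / 2) * a), sq_nonneg (x * (3 - x))]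
  · have h : 0 < 1 - x / 2 + 3 / 8 * x ^ 2 := by nlinarith [sq_nonneg (x - 4/3)]
    rw [show a⁻¹ = 1 / a from (one_div a).symm, div_le_iff₀ ha]
    have hP : 0 ≤ (1 - x / 2 + 3 / 8 * x ^ 2) * a := by positivity
    have hsq : 1 ≤ ((1 - x / 2 + 3 / 8 * x ^ 2) * a) ^ 2 := by
      have hkey : (0:ℝ) ≤ x ^ 3 * (40 - 15 * x + 9 * x ^ 2) := by
        apply mul_nonneg (by positivity)
        nlinarith [sq_nonneg (x - 5/6)]
      nlinarith [hkey]
    have habs := (one_le_sq_iff_one_le_abs _).mp hsq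
    rwa [abs_of_nonneg hP] at habs

set_option maxHeartbeats 1600000 in
/-- Suppose `B²β ≤ 2/3`. For every unit vector `v` and every `y` with
`‖y‖² ≤ B`, the normalizing factor satisfies
`|‖v + β(vᵀy)³y‖⁻¹ − 1 + β(vᵀy)⁴| ≤ (73/18)·B⁴β²`. -/
theorem stmt_8 {d : ℕ} (β B : ℝ) (hβ : 0 < β) (hB : 0 < B) (hcond : B ^ 2 * β ≤ 2 / 3)
    (v y : EuclideanSpace ℝ (Fin d)) (hv : ‖v‖ = 1) (hy : ‖y‖ ^ 2 ≤ B) :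
    |‖v + (β * (∑ i, v i * y i) ^ 3) • y‖⁻¹ - 1 + β * (∑ i, v i * y i) ^ 4|
      ≤ 73 / 18 * B ^ 4 * β ^ 2 := by
  set s : ℝ := ∑ i, v i * y i with hs
  have hinner : (inner ℝ v y : ℝ) = s := by
    simp [PiLp.inner_apply, RCLike.inner_apply, hs, mul_comm]
  have hs2 : s ^ 2 ≤ ‖y‖ ^ 2 := by
    have := abs_real_inner_le_norm v y
    rw [hinner, hv, one_mul] at this
    nlinarith [abs_nonneg s, sq_abs s]
  have hyB : s ^ 2 ≤ B := le_trans hs2 hy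
  have hnorm : ‖v + (β * s ^ 3) • y‖ ^ 2
      = 1 + (2 * (β * s ^ 4) + β ^ 2 * s ^ 6 * ‖y‖ ^ 2) := by
    rw [norm_add_sq_real, real_inner_smul_right, norm_smul, hinner, hv]
    rw [Real.norm_eq_abs, mul_pow, sq_abs]
    ring
  set a : ℝ := ‖v + (β * s ^ 3) • y‖ with hadef
  set t : ℝ := β * s ^ 4 with ht
  set r : ℝ := β ^ 2 * s ^ 6 * ‖y‖ ^ 2 with hr
  set x : ℝ := 2 * t + r with hx
  have ht0 : 0 ≤ t := by positivity
  have hr0 : 0 ≤ r := by positivity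
  have hx0 : 0 ≤ x := by positivity
  have hc0 : 0 < B ^ 2 * β := by positivity
  have htc : t ≤ B ^ 2 * β := by
    have : s ^ 4 ≤ B ^ 2 := by nlinarith
    nlinarith
  have hrc : r ≤ (B ^ 2 * β) ^ 2 := by
    have h6 : s ^ 6 ≤ B ^ 3 := by nlinarith [sq_nonneg s, sq_nonneg (s^2)]
    have hy0 : (0:ℝ) ≤ ‖y‖ ^ 2 := by positivity
    have : s ^ 6 * ‖y‖ ^ 2 ≤ B ^ 3 * B := by
      apply mul_le_mul h6 hy hy0 (by positivity)
    nlinarith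
  have hx3 : x ≤ 3 := by nlinarith
  have ha2 : a ^ 2 = 1 + x := by rw [hadef, hnorm]
  have hxdef : x = 2 * t + r := hx
  have h0 : (0:ℝ) ≤ a := hadef ▸ norm_nonneg _
  clear_value a x t r s
  clear hnorm hinner hs2 hyB hv hy hadef hs ht hr hx
  clear v y
  have ha : 0 < a := by nlinarith
  obtain ⟨hl, hu⟩ := inv_sqrt_bounds a x ha ha2 hx0 hx3
  rw [abs_le]
  have hEq : (B ^ 2 * β) ^ 2 = B ^ 4 * β ^ 2 := by ring
  constructor
  · linarith
  · have hxb : x ≤ 2 * (B ^ 2 * β) + (B ^ 2 * β) ^ 2 := by linarith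
    have h1 : (2 + B ^ 2 * β) ^ 2 ≤ 64 / 9 := by nlinarith
    have h2 : (B ^ 2 * β) ^ 2 * (2 + B ^ 2 * β) ^ 2 ≤ (B ^ 2 * β) ^ 2 * (64 / 9) :=
      mul_le_mul_of_nonneg_left h1 (sq_nonneg _)
    have h38 : 3 / 8 * x ^ 2 ≤ 73 / 18 * (B ^ 2 * β) ^ 2 := by
      nlinarith [mul_self_le_mul_self hx0 hxb, h2, sq_nonneg (B ^ 2 * β)]
    linarith
end

section
/- Let a > 0 and let V : [0,∞) → ℝ^d be differentiable, solving the system dV_k/dt = a·V_k·(V_k² − Σ_{i=1}^d Vᵢ⁴) for each k = 1,…,d. If V₁(0)² ≥ 2·V_k(0)² for all k > 1, then for all t ≥ 0 and all k > 1, V₁(t)² ≥ 2·V_k(t)². -/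
/-- Let `a > 0` and `V : [0,∞) → ℝ^d` be differentiable, solving
`dV_k/dt = a·V_k·(V_k² − Σᵢ Vᵢ⁴)` for each `k`. If `V₁(0)² ≥ 2·V_k(0)²` for all `k > 1`,
then `V₁(t)² ≥ 2·V_k(t)²` for all `t ≥ 0` and all `k > 1`. -/
theorem stmt_10 {d : ℕ} [NeZero d] (a : ℝ) (ha : 0 < a)
    (V : ℝ → EuclideanSpace ℝ (Fin d))
    (hODE : ∀ t ∈ Set.Ici (0 : ℝ), ∀ k : Fin d,
      HasDerivWithinAt (fun s => V s k)
        (a * V t k * ((V t k) ^ 2 - ∑ i, (V t i) ^ 4)) (Set.Ici 0) t)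
    (h0 : ∀ k : Fin d, k ≠ 0 → 2 * (V 0 k) ^ 2 ≤ (V 0 0) ^ 2) :
    ∀ t ∈ Set.Ici (0 : ℝ), ∀ k : Fin d, k ≠ 0 → 2 * (V t k) ^ 2 ≤ (V t 0) ^ 2 := by
  intro T hT k hk
  rw [Set.mem_Ici] at hT
  -- components are continuous on `Ici 0`
  have hcont : ∀ j : Fin d, ContinuousOn (fun s => V s j) (Set.Ici 0) :=
    fun j s hs => (hODE s hs j).continuousWithinAt
  set S : ℝ → ℝ := fun s => ∑ i, (V s i) ^ 4 with hS
  have hScont : ContinuousOn S (Set.Ici 0) := by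
    apply continuousOn_finset_sum
    intro i _
    exact (hcont i).pow 4
  set g : ℝ → ℝ := fun s => 2 * (V s k) ^ 2 - (V s 0) ^ 2 with hg
  set C : ℝ → ℝ := fun s => 2 * a * ((V s 0) ^ 2 + 2 * (V s k) ^ 2 - S s) with hC
  set g' : ℝ → ℝ := fun s => C s * g s - 4 * a * (V s k) ^ 4 with hg'
  have hgcont : ContinuousOn g (Set.Ici 0) :=
    (continuousOn_const.mul ((hcont k).pow 2)).sub ((hcont 0).pow 2)
  have hCcont : ContinuousOn C (Set.Ici 0) :=
    continuousOn_const.mul ((((hcont 0).pow 2).add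
      (continuousOn_const.mul ((hcont k).pow 2))).sub hScont)
  have hgderiv : ∀ x ∈ Set.Ico (0 : ℝ) T, HasDerivWithinAt g (g' x) (Set.Ici x) x := by
    intro x hx
    have hx0 : x ∈ Set.Ici (0 : ℝ) := hx.1
    have hk' := hODE x hx0 k
    have h0' := hODE x hx0 0
    have : HasDerivWithinAt g
        (2 * (2 * (V x k) ^ 1 * (a * V x k * ((V x k) ^ 2 - S x)))
          - 2 * (V x 0) ^ 1 * (a * V x 0 * ((V x 0) ^ 2 - S x))) (Set.Ici 0) x :=
      ((hk'.pow 2).const_mul 2).sub (h0'.pow 2)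
    have heq : g' x = 2 * (2 * (V x k) ^ 1 * (a * V x k * ((V x k) ^ 2 - S x)))
          - 2 * (V x 0) ^ 1 * (a * V x 0 * ((V x 0) ^ 2 - S x)) := by
      simp only [hg', hC, hg]
      ring
    rw [heq]
    exact this.mono (Set.Ici_subset_Ici.mpr hx.1)
  -- bound C on [0, T]
  have hne : (Set.Icc (0 : ℝ) T).Nonempty := ⟨0, le_refl 0, hT⟩
  obtain ⟨m, hm, hmax⟩ := isCompact_Icc.exists_isMaxOn hne
    (hCcont.mono (Set.Icc_subset_Ici_self))
  set L : ℝ := C m + 1 with hL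
  have hCL : ∀ x ∈ Set.Icc (0 : ℝ) T, C x < L := fun x hx =>
    lt_of_le_of_lt (hmax hx) (lt_add_one _)
  -- for every η > 0, g ≤ η · exp (L x) on [0, T]
  have key : ∀ η > (0 : ℝ), g T ≤ η * Real.exp (L * T) := by
    intro η hη
    have hB : ∀ x : ℝ, HasDerivAt (fun x => η * Real.exp (L * x))
        (η * (Real.exp (L * x) * L)) x := by
      intro x
      have h1 : HasDerivAt (fun x : ℝ => L * x) L x := by
        simpa using (hasDerivAt_id x).const_mul L
      exact ((Real.hasDerivAt_exp (L * x)).comp x h1).const_mul η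
    have := image_le_of_deriv_right_lt_deriv_boundary
      (f := g) (f' := g') (a := 0) (b := T)
      (hgcont.mono Set.Icc_subset_Ici_self) hgderiv
      (B := fun x => η * Real.exp (L * x)) (B' := fun x => η * (Real.exp (L * x) * L))
      (by
        simp only [mul_zero, Real.exp_zero, mul_one]
        have := h0 k hk
        simp only [hg]
        nlinarith)
      hB
      (by
        intro x hx hgx
        have hBpos : 0 < η * Real.exp (L * x) := by positivity
        have hgpos : 0 < g x := hgx ▸ hBpos
        have hCx : C x < L := hCL x ⟨hx.1, le_of_lt hx.2⟩
        have h1 : g' x ≤ C x * g x := by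
          simp only [hg']
          nlinarith [pow_le_pow_left₀ (le_refl (0:ℝ)) (sq_nonneg (V x k)) 2,
            sq_nonneg ((V x k) ^ 2), ha.le]
        calc g' x ≤ C x * g x := h1
          _ < L * g x := by nlinarith
          _ = η * (Real.exp (L * x) * L) := by rw [hgx]; ring)
    exact this ⟨hT, le_refl T⟩
  -- let η → 0
  have hgT : g T ≤ 0 := by
    by_contra h
    push_neg at h
    have hε : (0:ℝ) < g T / (2 * Real.exp (L * T)) := by positivity
    have := key _ hε
    have he : Real.exp (L * T) ≠ 0 := (Real.exp_pos _).ne'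
    rw [div_mul_eq_mul_div, mul_comm (2:ℝ), ← div_div, mul_div_assoc,
      div_self he, mul_one] at this
    simp only [hg] at this h
    linarith
  simpa [hg] using sub_nonpos.mp hgT
end

section
/- Let a > 0 and let V : [0,∞) → ℝ^d be a differentiable solution of dV_k/dt = a·V_k·(V_k² − Σ_{i=1}^d Vᵢ⁴), k = 1,…,d, with ‖V(0)‖ = 1 and V₁(0)² ≥ 2·V_k(0)² for all k > 1. Then for all t ≥ 0, a·V₁(t)⁴·(1 − V₁(t)²) ≤ d(V₁²)/dt (t) ≤ 2a·V₁(t)⁴·(1 − V₁(t)²). -/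
open Set

lemma aux_nonneg (g g' c : ℝ → ℝ) (hc : Continuous c)
    (hg : ∀ t ∈ Ici (0:ℝ), HasDerivWithinAt g (g' t) (Ici 0) t)
    (hge : ∀ t ∈ Ici (0:ℝ), c t * g t ≤ g' t) (h0 : 0 ≤ g 0) :
    ∀ t ∈ Ici (0:ℝ), 0 ≤ g t := by
  intro t ht
  set C : ℝ → ℝ := fun x => ∫ u in (0:ℝ)..x, c u with hCdef
  have hCd : ∀ x : ℝ, HasDerivAt C (c x) x := fun x =>
    (hc.integral_hasStrictDerivAt 0 x).hasDerivAt
  have hCc : Continuous C := continuous_iff_continuousAt.2 fun x => (hCd x).continuousAt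
  set ψ : ℝ → ℝ := fun x => g x * Real.exp (-(C x)) with hψdef
  have hgc : ContinuousOn g (Ici 0) := fun u hu => (hg u hu).continuousWithinAt
  have hψc : ContinuousOn ψ (Ici 0) :=
    hgc.mul ((Real.continuous_exp.comp hCc.neg).continuousOn)
  have hder : ∀ x ∈ Ioi (0:ℝ), HasDerivAt ψ ((g' x - c x * g x) * Real.exp (-(C x))) x := by
    intro x hx
    have hgx : HasDerivAt g (g' x) x := (hg x (Set.mem_Ici.2 (le_of_lt (Set.mem_Ioi.1 hx)))).hasDerivAt (Ici_mem_nhds hx)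
    have hE : HasDerivAt (fun u => Real.exp (-(C u))) (Real.exp (-(C x)) * (-(c x))) x :=
      ((hCd x).neg).exp
    have := hgx.mul hE
    refine this.congr_deriv ?_
    ring
  have hmono : MonotoneOn ψ (Ici 0) := by
    apply monotoneOn_of_deriv_nonneg (convex_Ici 0) hψc
    · intro x hx
      rw [interior_Ici] at hx
      exact ((hder x hx).differentiableAt).differentiableWithinAt
    · intro x hx
      rw [interior_Ici] at hx
      rw [(hder x hx).deriv]
      exact mul_nonneg (sub_nonneg.2 (hge x (Set.mem_Ici.2 (le_of_lt (Set.mem_Ioi.1 hx))))) (Real.exp_nonneg _)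
  have h1 : ψ 0 ≤ ψ t := hmono self_mem_Ici ht ht
  have h2 : ψ 0 = g 0 := by
    simp [hψdef, hCdef, intervalIntegral.integral_same]
  have h3 : 0 < Real.exp (-(C t)) := Real.exp_pos _
  have h4 : 0 ≤ g t * Real.exp (-(C t)) := by
    have := le_trans h0 (h2 ▸ h1); simpa [hψdef] using this
  nlinarith

/-- Let `a > 0` and `V : [0,∞) → ℝ^d` be a differentiable solution of
`dV_k/dt = a·V_k·(V_k² − Σᵢ Vᵢ⁴)` with `‖V(0)‖ = 1` and `V₁(0)² ≥ 2·V_k(0)²` for all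
`k > 1`. Then for all `t ≥ 0`,
`a·V₁(t)⁴·(1 − V₁(t)²) ≤ d(V₁²)/dt(t) ≤ 2a·V₁(t)⁴·(1 − V₁(t)²)`. -/
theorem stmt_12 {d : ℕ} [NeZero d] (a : ℝ) (ha : 0 < a)
    (V : ℝ → EuclideanSpace ℝ (Fin d))
    (hODE : ∀ t ∈ Set.Ici (0 : ℝ), ∀ k : Fin d,
      HasDerivWithinAt (fun s => V s k)
        (a * V t k * ((V t k) ^ 2 - ∑ i, (V t i) ^ 4)) (Set.Ici 0) t)
    (hnorm : ‖V 0‖ = 1)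
    (h0 : ∀ k : Fin d, k ≠ 0 → 2 * (V 0 k) ^ 2 ≤ (V 0 0) ^ 2) :
    ∀ t ∈ Set.Ici (0 : ℝ),
      a * (V t 0) ^ 4 * (1 - (V t 0) ^ 2)
          ≤ derivWithin (fun s => (V s 0) ^ 2) (Set.Ici 0) t ∧
      derivWithin (fun s => (V s 0) ^ 2) (Set.Ici 0) t
          ≤ 2 * a * (V t 0) ^ 4 * (1 - (V t 0) ^ 2) := by
  have hcont : ∀ k : Fin d, ContinuousOn (fun s => V s k) (Ici 0) :=
    fun k u hu => (hODE u hu k).continuousWithinAt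
  set Q : ℝ → ℝ := fun s => ∑ i, (V s i) ^ 4 with hQdef
  have hQcont : ContinuousOn Q (Ici 0) :=
    continuousOn_finset_sum _ fun i _ => (hcont i).pow 4
  have hmax : Continuous fun x : ℝ => max x 0 := continuous_id.max continuous_const
  have hmem : ∀ x : ℝ, max x 0 ∈ Ici (0:ℝ) := fun x => Set.mem_Ici.2 (le_max_right _ _)
  have hVe : ∀ k : Fin d, Continuous fun x => V (max x 0) k :=
    fun k => (hcont k).comp_continuous hmax hmem
  have hQe : Continuous fun x => Q (max x 0) := hQcont.comp_continuous hmax hmem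
  -- sphere invariance
  set S : ℝ → ℝ := fun s => ∑ i, (V s i) ^ 2 with hSdef
  have hS0 : S 0 = 1 := by
    have h : ‖V 0‖ ^ 2 = 1 := by rw [hnorm]; norm_num
    rw [EuclideanSpace.norm_eq, Real.sq_sqrt (by positivity)] at h
    rw [hSdef]
    simpa [Real.norm_eq_abs, sq_abs] using h
  have hgder : ∀ u ∈ Ici (0:ℝ),
      HasDerivWithinAt (fun s => S s - 1) ((-(2 * a * Q u)) * (S u - 1)) (Ici 0) u := by
    intro u hu
    have h1 : HasDerivWithinAt S
        (∑ i, ((2:ℕ) * (V u i) ^ 1 * (a * V u i * ((V u i) ^ 2 - Q u)))) (Ici 0) u :=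
      HasDerivWithinAt.fun_sum fun i _ => (hODE u hu i).pow 2
    have h2 := h1.sub_const 1
    refine h2.congr_deriv ?_
    have he : ∀ i : Fin d, ((2:ℕ) : ℝ) * (V u i) ^ 1 * (a * V u i * ((V u i) ^ 2 - Q u))
        = 2 * a * (V u i) ^ 4 - (2 * a * Q u) * (V u i) ^ 2 := fun i => by push_cast; ring
    rw [Finset.sum_congr rfl fun i _ => he i, Finset.sum_sub_distrib, ← Finset.mul_sum,
      ← Finset.mul_sum]
    have e1 : ∑ i, (V u i) ^ 4 = Q u := rfl
    have e2 : ∑ i, (V u i) ^ 2 = S u := rfl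
    rw [e1, e2]
    ring
  have hSone : ∀ u ∈ Ici (0:ℝ), S u = 1 := by
    have hcc : Continuous fun x => -(2 * a * Q (max x 0)) :=
      (continuous_const.mul hQe).neg
    have hpos := aux_nonneg (fun u => S u - 1) (fun u => (-(2 * a * Q u)) * (S u - 1))
      (fun x => -(2 * a * Q (max x 0))) hcc hgder
      (fun u hu => by simp only [max_eq_left (Set.mem_Ici.1 hu)]; exact le_rfl)
      (by simp [hS0])
    have hneg := aux_nonneg (fun u => -(S u - 1)) (fun u => (-(2 * a * Q u)) * (-(S u - 1)))
      (fun x => -(2 * a * Q (max x 0))) hcc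
      (fun u hu => by have := (hgder u hu).neg; refine this.congr_deriv ?_; ring)
      (fun u hu => by simp only [max_eq_left (Set.mem_Ici.1 hu)]; exact le_rfl)
      (by simp [hS0])
    intro u hu
    have h1 : 0 ≤ S u - 1 := hpos u hu
    have h2 : 0 ≤ -(S u - 1) := hneg u hu
    linarith
  -- ordering invariance
  have horder : ∀ k : Fin d, k ≠ 0 → ∀ u ∈ Ici (0:ℝ),
      0 ≤ (V u 0) ^ 2 - 2 * (V u k) ^ 2 := by
    intro k hk
    set W : ℝ → ℝ := fun u => (V u 0) ^ 2 - 2 * (V u k) ^ 2 with hWdef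
    set W' : ℝ → ℝ := fun u =>
      2 * a * (V u 0) ^ 2 * ((V u 0) ^ 2 - Q u)
        - 4 * a * (V u k) ^ 2 * ((V u k) ^ 2 - Q u) with hW'def
    have hW : ∀ u ∈ Ici (0:ℝ), HasDerivWithinAt W (W' u) (Ici 0) u := by
      intro u hu
      have h1 := (hODE u hu 0).pow 2
      have h2 := ((hODE u hu k).pow 2).const_mul (2:ℝ)
      have h3 := h1.sub h2
      refine h3.congr_deriv ?_
      push_cast
      ring
    set c : ℝ → ℝ := fun x =>
      2 * a * ((V (max x 0) 0) ^ 2 + Real.sqrt 2 * (V (max x 0) k) ^ 2)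
        - 2 * a * Q (max x 0) with hcdef
    have hcc : Continuous c :=
      (continuous_const.mul (((hVe 0).pow 2).add (continuous_const.mul ((hVe k).pow 2)))).sub
        (continuous_const.mul hQe)
    apply aux_nonneg W W' c hcc hW
    · intro u hu
      simp only [hcdef, hWdef, hW'def, max_eq_left (Set.mem_Ici.1 hu)]
      have hr0 : (0:ℝ) ≤ Real.sqrt 2 := Real.sqrt_nonneg 2
      have hr2 : (Real.sqrt 2) ^ 2 = 2 := Real.sq_sqrt (by norm_num)
      have hrle : Real.sqrt 2 ≤ 2 := by nlinarith
      have hrge : (1:ℝ) ≤ Real.sqrt 2 := by nlinarith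
      have hx : (0:ℝ) ≤ (V u 0) ^ 2 := sq_nonneg _
      have hy : (0:ℝ) ≤ (V u k) ^ 2 := sq_nonneg _
      nlinarith [mul_nonneg (mul_nonneg (mul_nonneg ha.le hy)
          (by linarith : (0:ℝ) ≤ 2 - Real.sqrt 2)) hx,
        mul_nonneg (mul_nonneg (mul_nonneg ha.le hy)
          (by linarith : (0:ℝ) ≤ Real.sqrt 2 - 1)) hy]
    · have := h0 k hk
      simp only [hWdef]
      linarith
  -- final computation
  intro t ht
  have hud : UniqueDiffWithinAt ℝ (Ici (0:ℝ)) t := uniqueDiffOn_Ici 0 t ht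
  have hd := (hODE t ht 0).pow 2
  have hdw : derivWithin (fun s => (V s 0) ^ 2) (Set.Ici 0) t
      = ((2:ℕ) : ℝ) * (V t 0) ^ 1 * (a * V t 0 * ((V t 0) ^ 2 - Q t)) := hd.derivWithin hud
  rw [hdw]
  have hq1 : (V t 0) ^ 4 ≤ Q t :=
    Finset.single_le_sum (f := fun i : Fin d => (V t i) ^ 4)
      (fun i _ => by positivity) (Finset.mem_univ 0)
  have hsum : ∑ i ∈ Finset.univ.erase 0, (V t i) ^ 2 = 1 - (V t 0) ^ 2 := by
    have h1 := hSone t ht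
    have h2 : (V t 0) ^ 2 + ∑ i ∈ Finset.univ.erase 0, (V t i) ^ 2 = S t :=
      Finset.add_sum_erase _ (fun i : Fin d => (V t i) ^ 2) (Finset.mem_univ (0 : Fin d))
    rw [h1] at h2
    linarith
  have hq2 : Q t ≤ (V t 0) ^ 4 + ((V t 0) ^ 2 / 2) * (1 - (V t 0) ^ 2) := by
    have hbound : ∀ i ∈ Finset.univ.erase (0 : Fin d),
        (V t i) ^ 4 ≤ ((V t 0) ^ 2 / 2) * (V t i) ^ 2 := by
      intro i hi
      have hw := horder i (Finset.ne_of_mem_erase hi) t ht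
      nlinarith [sq_nonneg (V t i)]
    have h2 : Q t = (V t 0) ^ 4 + ∑ i ∈ Finset.univ.erase 0, (V t i) ^ 4 :=
      (Finset.add_sum_erase _ (fun i : Fin d => (V t i) ^ 4) (Finset.mem_univ (0 : Fin d))).symm
    have h3 : ∑ i ∈ Finset.univ.erase (0 : Fin d), (V t i) ^ 4
        ≤ ∑ i ∈ Finset.univ.erase 0, ((V t 0) ^ 2 / 2) * (V t i) ^ 2 :=
      Finset.sum_le_sum hbound
    rw [← Finset.mul_sum, hsum] at h3
    linarith
  have hx : (0:ℝ) ≤ (V t 0) ^ 2 := sq_nonneg _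
  constructor
  · push_cast
    nlinarith [mul_nonneg (mul_nonneg ha.le hx) (sub_nonneg.2 hq2)]
  · push_cast
    nlinarith [mul_nonneg (mul_nonneg ha.le hx) (sub_nonneg.2 hq1)]
end

section
/- Fix d ≥ 3 and δ ∈ (0, 1/2). Let y : [0,∞) → ℝ be a differentiable solution of the scalar ODE dy/dt = y²·(1 − y) with initial value y(0) = 2/(d + 1). Then there exists T₀ ≥ 0 with y(T₀) = 1 − δ, and any such T₀ satisfies T₀ ≤ d − 3 + 4·log(1/(2δ)). -/
open Set Real

private lemma stmt13_G_deriv {x : ℝ} (hx0 : 0 < x) (hx1 : x < 1) :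
    HasDerivAt (fun u : ℝ => Real.log u - Real.log (1 - u) - u⁻¹)
      (x⁻¹ + (1 - x)⁻¹ + (x ^ 2)⁻¹) x := by
  have h1x : (0:ℝ) < 1 - x := by linarith
  have h1 : HasDerivAt Real.log x⁻¹ x := Real.hasDerivAt_log hx0.ne'
  have h2 : HasDerivAt (fun u : ℝ => Real.log (1 - u)) ((1 - x)⁻¹ * (0 - 1)) x := by
    exact (Real.hasDerivAt_log h1x.ne').comp x ((hasDerivAt_const x (1:ℝ)).sub (hasDerivAt_id x))
  have h3 : HasDerivAt (fun u : ℝ => u⁻¹) (-(x ^ 2)⁻¹) x := hasDerivAt_inv hx0.ne'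
  have := (h1.sub h2).sub h3
  refine this.congr_deriv ?_
  ring

/-- Fix `d ≥ 3` and `δ ∈ (0, 1/2)`. Let `y : [0,∞) → ℝ` be a differentiable
solution of `dy/dt = y²·(1 − y)` with `y(0) = 2/(d + 1)`. Then there exists `T₀ ≥ 0` with
`y(T₀) = 1 − δ`, and any such `T₀` satisfies `T₀ ≤ d − 3 + 4·log(1/(2δ))`. -/
theorem stmt_13 (d : ℕ) (hd : 3 ≤ d) (δ : ℝ) (hδ : δ ∈ Set.Ioo (0 : ℝ) (1 / 2))
    (y : ℝ → ℝ)
    (hODE : ∀ t ∈ Set.Ici (0 : ℝ),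
      HasDerivWithinAt y ((y t) ^ 2 * (1 - y t)) (Set.Ici 0) t)
    (h0 : y 0 = 2 / (d + 1)) :
    (∃ T₀ ≥ (0 : ℝ), y T₀ = 1 - δ) ∧
    ∀ T₀ ≥ (0 : ℝ), y T₀ = 1 - δ → T₀ ≤ d - 3 + 4 * Real.log (1 / (2 * δ)) := by
  obtain ⟨hδ0, hδ2⟩ := hδ
  have hd3 : (3:ℝ) ≤ (d:ℝ) := by exact_mod_cast hd
  have hdpos : (0:ℝ) < (d:ℝ) + 1 := by linarith
  have hy0pos : 0 < y 0 := by rw [h0]; positivity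
  have hy0half : y 0 ≤ 1/2 := by
    rw [h0, div_le_div_iff₀ hdpos (by norm_num)]
    linarith
  have hcont : ContinuousOn y (Ici 0) := fun t ht => (hODE t ht).continuousWithinAt
  -- upper barrier : y ≤ 1 on [0, ∞)
  have hle1 : ∀ t ∈ Ici (0:ℝ), y t ≤ 1 := by
    intro t₁ ht₁
    by_contra hgt1
    push_neg at hgt1
    set S : Set ℝ := Icc 0 t₁ ∩ y ⁻¹' (Iic 1) with hSdef
    have hIcc : Icc (0:ℝ) t₁ ⊆ Ici 0 := fun u hu => hu.1
    have hy01 : y 0 ≤ 1 := hy0half.trans (by norm_num)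
    have hS0 : (0:ℝ) ∈ S := ⟨⟨le_refl 0, ht₁⟩, hy01⟩
    have hSbdd : BddAbove S := ⟨t₁, fun u hu => hu.1.2⟩
    have hSc : IsClosed S :=
      (hcont.mono hIcc).preimage_isClosed_of_isClosed isClosed_Icc isClosed_Iic
    have hsmem := hSc.csSup_mem ⟨0, hS0⟩ hSbdd
    set s := sSup S with hs
    obtain ⟨⟨hs0, hst₁⟩, hys⟩ := hsmem
    have hys' : y s ≤ 1 := hys
    have hslt : s < t₁ := by
      rcases lt_or_eq_of_le hst₁ with hlt | heq
      · exact hlt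
      · rw [heq] at hys'; exact absurd hys' (not_le.2 hgt1)
    have hgt : ∀ u ∈ Ioc s t₁, 1 < y u := by
      intro u hu
      by_contra hc
      push_neg at hc
      have hu' : u ∈ S := ⟨⟨hs0.trans hu.1.le, hu.2⟩, hc⟩
      exact absurd (le_csSup hSbdd hu') (not_le.2 hu.1)
    have hanti : AntitoneOn y (Icc s t₁) := by
      apply antitoneOn_of_hasDerivWithinAt_nonpos (convex_Icc s t₁)
        (hcont.mono (fun u hu => hs0.trans hu.1))
        (f' := fun u => (y u) ^ 2 * (1 - y u))
      · intro u hu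
        rw [interior_Icc] at hu
        refine (hODE u (hs0.trans hu.1.le)).mono ?_
        rw [interior_Icc]
        exact fun v hv => hs0.trans hv.1.le
      · intro u hu
        rw [interior_Icc] at hu
        have := hgt u ⟨hu.1, hu.2.le⟩
        nlinarith [sq_nonneg (y u)]
    have := hanti (left_mem_Icc.2 hslt.le) (right_mem_Icc.2 hslt.le) hslt.le
    linarith
  -- lower barrier : y ≥ 0 on [0, ∞)
  have hge0 : ∀ t ∈ Ici (0:ℝ), 0 ≤ y t := by
    intro t₁ ht₁
    by_contra hlt0
    push_neg at hlt0
    set S : Set ℝ := Icc 0 t₁ ∩ y ⁻¹' (Ici 0) with hSdef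
    have hIcc : Icc (0:ℝ) t₁ ⊆ Ici 0 := fun u hu => hu.1
    have hS0 : (0:ℝ) ∈ S := ⟨⟨le_refl 0, ht₁⟩, hy0pos.le⟩
    have hSbdd : BddAbove S := ⟨t₁, fun u hu => hu.1.2⟩
    have hSc : IsClosed S :=
      (hcont.mono hIcc).preimage_isClosed_of_isClosed isClosed_Icc isClosed_Ici
    have hsmem := hSc.csSup_mem ⟨0, hS0⟩ hSbdd
    set s := sSup S with hs
    obtain ⟨⟨hs0, hst₁⟩, hys⟩ := hsmem
    have hys' : 0 ≤ y s := hys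
    have hslt : s < t₁ := by
      rcases lt_or_eq_of_le hst₁ with hlt | heq
      · exact hlt
      · rw [heq] at hys'; exact absurd hys' (not_le.2 hlt0)
    have hgt : ∀ u ∈ Ioc s t₁, y u < 0 := by
      intro u hu
      by_contra hc
      push_neg at hc
      have hu' : u ∈ S := ⟨⟨hs0.trans hu.1.le, hu.2⟩, hc⟩
      exact absurd (le_csSup hSbdd hu') (not_le.2 hu.1)
    have hmon : MonotoneOn y (Icc s t₁) := by
      apply monotoneOn_of_hasDerivWithinAt_nonneg (convex_Icc s t₁)
        (hcont.mono (fun u hu => hs0.trans hu.1))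
        (f' := fun u => (y u) ^ 2 * (1 - y u))
      · intro u hu
        rw [interior_Icc] at hu
        refine (hODE u (hs0.trans hu.1.le)).mono ?_
        rw [interior_Icc]
        exact fun v hv => hs0.trans hv.1.le
      · intro u hu
        rw [interior_Icc] at hu
        have := hgt u ⟨hu.1, hu.2.le⟩
        nlinarith [sq_nonneg (y u)]
    have := hmon (left_mem_Icc.2 hslt.le) (right_mem_Icc.2 hslt.le) hslt.le
    linarith
  -- monotonicity on [0, ∞)
  have hmono : MonotoneOn y (Ici 0) := by
    apply monotoneOn_of_hasDerivWithinAt_nonneg (convex_Ici 0) hcont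
      (f' := fun u => (y u) ^ 2 * (1 - y u))
    · intro u hu
      rw [interior_Ici] at hu
      refine (hODE u (mem_Ici.2 (mem_Ioi.1 hu).le)).mono ?_
      rw [interior_Ici]
      exact fun v hv => mem_Ici.2 (mem_Ioi.1 hv).le
    · intro u hu
      rw [interior_Ici] at hu
      have h1 := hle1 u (mem_Ici.2 (mem_Ioi.1 hu).le)
      have h2 := hge0 u (mem_Ici.2 (mem_Ioi.1 hu).le)
      nlinarith [sq_nonneg (y u)]
  -- existence of some time where y ≥ 1 - δ
  have hreach : ∃ T ≥ (0:ℝ), 1 - δ ≤ y T := by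
    by_contra h
    push_neg at h
    set c : ℝ := (y 0) ^ 2 * δ with hc
    have hcpos : 0 < c := by positivity
    have hmonog : MonotoneOn (fun t => y t - c * t) (Ici 0) := by
      apply monotoneOn_of_hasDerivWithinAt_nonneg (convex_Ici 0)
        (f' := fun u => (y u) ^ 2 * (1 - y u) - c)
      · exact (hcont.sub (continuous_const.mul continuous_id).continuousOn)
      · intro u hu
        rw [interior_Ici] at hu ⊢
        have h1 : HasDerivWithinAt y ((y u) ^ 2 * (1 - y u)) (Ioi 0) u :=
          (hODE u (mem_Ici.2 (mem_Ioi.1 hu).le)).mono (fun v hv => mem_Ici.2 (mem_Ioi.1 hv).le)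
        have h2 : HasDerivWithinAt (fun t : ℝ => c * t) (c * 1) (Ioi 0) u :=
          ((hasDerivAt_id u).const_mul c).hasDerivWithinAt
        exact (h1.sub h2).congr_deriv (by rw [mul_one])
      · intro u hu
        rw [interior_Ici] at hu
        have hylow : y 0 ≤ y u := hmono (mem_Ici.2 (le_refl 0)) (mem_Ici.2 (mem_Ioi.1 hu).le) (mem_Ioi.1 hu).le
        have hyup : y u < 1 - δ := h u hu.le
        have hsq : (y 0) ^ 2 ≤ (y u) ^ 2 := by nlinarith
        have hkey : (y 0) ^ 2 * δ ≤ (y u) ^ 2 * (1 - y u) :=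
          mul_le_mul hsq (by linarith) hδ0.le (sq_nonneg (y u))
        simpa [hc] using sub_nonneg.2 hkey
    set T : ℝ := 1 / c with hT
    have hTpos : (0:ℝ) < T := by positivity
    have := hmonog (mem_Ici.2 (le_refl 0)) (mem_Ici.2 hTpos.le) hTpos.le
    have hcT : c * T = 1 := by rw [hT]; field_simp
    have hup := hle1 T hTpos.le
    simp only [mul_zero, sub_zero] at this
    rw [hcT] at this
    linarith [h T hTpos.le]
  obtain ⟨T, hT0, hTy⟩ := hreach
  have hmemIcc : (1 - δ) ∈ Icc (y 0) (y T) := ⟨by linarith [hy0half], hTy⟩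
  obtain ⟨T₀, hT₀mem, hyT₀⟩ :=
    intermediate_value_Icc hT0 (hcont.mono (fun u hu => hu.1)) hmemIcc
  refine ⟨⟨T₀, hT₀mem.1, hyT₀⟩, ?_⟩
  -- the quantitative bound
  intro T₀ hT₀0 hyT₀
  clear hT₀mem hTy hT0 hmemIcc
  set G : ℝ → ℝ := fun u => Real.log u - Real.log (1 - u) - u⁻¹ with hG
  have hbnd : ∀ t ∈ Icc 0 T₀, y 0 ≤ y t ∧ y t ≤ 1 - δ := by
    intro t ht
    exact ⟨hmono (mem_Ici.2 (le_refl 0)) (mem_Ici.2 ht.1) ht.1,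
      (hmono (mem_Ici.2 ht.1) (mem_Ici.2 hT₀0) ht.2).trans_eq hyT₀⟩
  have hkey : ∀ t ∈ Ico 0 T₀, HasDerivWithinAt (fun t => G (y t) - t) 0 (Ici t) t := by
    intro t ht
    obtain ⟨hlow, hup⟩ := hbnd t ⟨ht.1, ht.2.le⟩
    have hx0 : 0 < y t := lt_of_lt_of_le hy0pos hlow
    have hx1 : y t < 1 := by linarith
    have hy' : HasDerivWithinAt y ((y t) ^ 2 * (1 - y t)) (Ici t) t :=
      (hODE t ht.1).mono (fun v hv => ht.1.trans hv)
    have hGd := stmt13_G_deriv hx0 hx1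
    have hcomp := hGd.comp_hasDerivWithinAt t hy'
    have hid : HasDerivWithinAt (fun u : ℝ => u) 1 (Ici t) t := hasDerivWithinAt_id t _
    have := hcomp.sub hid
    refine this.congr_deriv ?_
    have h1δ : (0:ℝ) < 1 - y t := by linarith
    field_simp
    ring
  have hcont' : ContinuousOn (fun t => G (y t) - t) (Icc 0 T₀) := by
    have hyIcc : ContinuousOn y (Icc 0 T₀) := hcont.mono (fun u hu => hu.1)
    have h1 : ContinuousOn (fun t => Real.log (y t)) (Icc 0 T₀) :=
      hyIcc.log (fun t ht => (lt_of_lt_of_le hy0pos (hbnd t ht).1).ne')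
    have h2 : ContinuousOn (fun t => Real.log (1 - y t)) (Icc 0 T₀) := by
      apply (continuousOn_const.sub hyIcc).log
      intro t ht
      have := (hbnd t ht).2
      have : 0 < 1 - y t := by linarith
      exact this.ne'
    have h3 : ContinuousOn (fun t => (y t)⁻¹) (Icc 0 T₀) :=
      hyIcc.inv₀ (fun t ht => (lt_of_lt_of_le hy0pos (hbnd t ht).1).ne')
    exact ((h1.sub h2).sub h3).sub continuousOn_id
  have hconst := constant_of_has_deriv_right_zero hcont' hkey T₀ (right_mem_Icc.2 hT₀0)
  simp only [sub_zero] at hconst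
  -- hconst : G (y T₀) - T₀ = G (y 0)
  have hTeq : T₀ = G (1 - δ) - G (y 0) := by
    rw [hyT₀] at hconst
    linarith [hconst]
  -- compute G values
  have h1δ : (0:ℝ) < 1 - δ := by linarith
  have hdm1 : (0:ℝ) < (d:ℝ) - 1 := by linarith
  have hGδ : G (1 - δ) = Real.log (1 - δ) - Real.log δ - (1 - δ)⁻¹ := by
    have e : (1:ℝ) - (1 - δ) = δ := by ring
    simp only [hG, e]
  have hGy0 : G (y 0) = Real.log 2 - Real.log ((d:ℝ) + 1)
      - (Real.log ((d:ℝ) - 1) - Real.log ((d:ℝ) + 1)) - ((d:ℝ) + 1) / 2 := by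
    simp only [hG, h0]
    have e1 : (1:ℝ) - 2 / ((d:ℝ) + 1) = ((d:ℝ) - 1) / ((d:ℝ) + 1) := by
      field_simp
      ring
    have e2 : ((2:ℝ) / ((d:ℝ) + 1))⁻¹ = ((d:ℝ) + 1) / 2 := by
      field_simp
    rw [e1, e2, Real.log_div (by norm_num) hdpos.ne', Real.log_div hdm1.ne' hdpos.ne']
  have hlogδ : Real.log (1 / (2 * δ)) = -(Real.log 2 + Real.log δ) := by
    rw [one_div, Real.log_inv, Real.log_mul (by norm_num) hδ0.ne']
  rw [hTeq, hGδ, hGy0, hlogδ]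
  -- elementary log bounds
  have hb1 : Real.log (((d:ℝ) - 1) / 2) ≤ ((d:ℝ) - 1) / 2 - 1 :=
    Real.log_le_sub_one_of_pos (by positivity)
  have hb2 : Real.log (2 * (1 - δ)) ≤ 2 * (1 - δ) - 1 :=
    Real.log_le_sub_one_of_pos (by positivity)
  have hb3 : Real.log (2 * δ) ≤ 2 * δ - 1 :=
    Real.log_le_sub_one_of_pos (by positivity)
  rw [Real.log_div hdm1.ne' (by norm_num)] at hb1
  rw [Real.log_mul (by norm_num) h1δ.ne'] at hb2
  rw [Real.log_mul (by norm_num) hδ0.ne'] at hb3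
  have hinv : 4 * δ ≤ (1 - δ)⁻¹ := by
    rw [inv_eq_one_div, le_div_iff₀ h1δ]
    nlinarith [sq_nonneg (2 * δ - 1)]
  linarith
end

section
/- Fix d ≥ 3, δ ∈ (0, 1/2), and a > 0. Let V : [0,∞) → ℝ^d be a differentiable solution of dV_k/dt = a·V_k·(V_k² − Σ_{i=1}^d Vᵢ⁴), k = 1,…,d, with ‖V(0)‖ = 1 and with an index k₀ such that V_{k₀}(0)² ≥ 2·V_k(0)² for all k ≠ k₀. Then there exists a time T ≥ 0 with V_{k₀}(T)² ≥ 1 − δ and T ≤ a^{−1}·(d − 3 + 4·log(1/(2δ))). -/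
open Set

/-- Solution formula for a scalar linear ODE `f' = c·f` on `[0,∞)`. -/
lemma lin_ode {f c : ℝ → ℝ} (hc : Continuous c)
    (hf : ∀ t ∈ Set.Ici (0:ℝ), HasDerivWithinAt f (c t * f t) (Set.Ici 0) t) :
    ∀ t ∈ Set.Ici (0:ℝ), f t = f 0 * Real.exp (∫ s in (0:ℝ)..t, c s) := by
  intro t ht
  set C : ℝ → ℝ := fun u => ∫ s in (0:ℝ)..u, c s with hCdef
  have hC : ∀ u : ℝ, HasDerivAt C (c u) u := fun u =>
    (hc.integral_hasStrictDerivAt 0 u).hasDerivAt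
  set g : ℝ → ℝ := fun u => f u * Real.exp (-C u) with hgdef
  have hgderiv : ∀ x ∈ Set.Ici (0:ℝ), HasDerivWithinAt g 0 (Set.Ici 0) x := by
    intro x hx
    have h1 : HasDerivWithinAt (fun u => Real.exp (-C u))
        (Real.exp (-C x) * (-c x)) (Set.Ici 0) x :=
      (((hC x).neg).exp).hasDerivWithinAt
    have h2 := (hf x hx).mul h1
    have : c x * f x * Real.exp (-C x) + f x * (Real.exp (-C x) * (-c x)) = 0 := by ring
    rw [this] at h2
    exact h2
  have hgcont : ContinuousOn g (Set.Icc 0 t) := by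
    intro x hx
    exact ((hgderiv x hx.1).continuousWithinAt).mono (fun s hs => hs.1)
  have key : g t = g 0 :=
    constant_of_has_deriv_right_zero hgcont
      (fun x hx => (hgderiv x hx.1).mono (fun s hs => le_trans hx.1 hs)) t
      ⟨ht, le_refl t⟩
  have hC0 : C 0 = 0 := by simp [hCdef]
  have : f t * Real.exp (-C t) = f 0 := by
    simpa [hgdef, hC0] using key
  have hexp : Real.exp (-C t) * Real.exp (C t) = 1 := by
    rw [← Real.exp_add]; simp
  calc f t = f t * (Real.exp (-C t) * Real.exp (C t)) := by rw [hexp]; ring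
    _ = (f t * Real.exp (-C t)) * Real.exp (C t) := by ring
    _ = f 0 * Real.exp (C t) := by rw [this]

/-- Monotonicity from a nonnegative right derivative on a compact subinterval of `[0,∞)`. -/
lemma mono_of_deriv {g g' : ℝ → ℝ} {x y : ℝ} (hx : 0 ≤ x) (hxy : x ≤ y)
    (hg : ∀ t ∈ Set.Icc x y, HasDerivWithinAt g (g' t) (Set.Ici 0) t)
    (hpos : ∀ t ∈ Set.Icc x y, 0 ≤ g' t) : g x ≤ g y := by
  have hsub : Set.Icc x y ⊆ Set.Ici (0:ℝ) := fun s hs => le_trans hx hs.1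
  have hDA : ∀ t ∈ interior (Set.Icc x y), HasDerivAt g (g' t) t := by
    intro t htI
    rw [interior_Icc] at htI
    have h0t : (0:ℝ) < t := lt_of_le_of_lt hx htI.1
    exact (hg t ⟨le_of_lt htI.1, le_of_lt htI.2⟩).hasDerivAt (Ici_mem_nhds h0t)
  have hmono : MonotoneOn g (Set.Icc x y) := by
    apply monotoneOn_of_deriv_nonneg (convex_Icc x y)
    · exact fun t ht => ((hg t ht).continuousWithinAt).mono hsub
    · exact fun t ht => (hDA t ht).differentiableAt.differentiableWithinAt
    · intro t ht
      rw [(hDA t ht).deriv]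
      rw [interior_Icc] at ht
      exact hpos t ⟨le_of_lt ht.1, le_of_lt ht.2⟩
  exact hmono ⟨le_refl x, hxy⟩ ⟨hxy, le_refl y⟩ hxy

/-- A function starting at `0` whose derivative is positive whenever it is nonnegative
stays nonnegative on `[0,∞)`. -/
lemma nonneg_of_deriv_pos {D D' : ℝ → ℝ}
    (hD : ∀ t, HasDerivAt D (D' t) t) (h0 : D 0 = 0)
    (hpos : ∀ t, 0 ≤ t → 0 ≤ D t → 0 < D' t) :
    ∀ t, 0 ≤ t → 0 ≤ D t := by
  by_contra hcon
  push_neg at hcon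
  obtain ⟨t₁, ht₁0, ht₁⟩ := hcon
  have hDcont : Continuous D := by
    rw [continuous_iff_continuousAt]; exact fun t => (hD t).continuousAt
  set A : Set ℝ := Set.Icc 0 t₁ ∩ {t | 0 ≤ D t} with hAdef
  have hAclosed : IsClosed A := isClosed_Icc.inter (isClosed_le continuous_const hDcont)
  have hAne : A.Nonempty := ⟨0, ⟨⟨le_refl 0, ht₁0⟩, le_of_eq h0.symm⟩⟩
  have hAbdd : BddAbove A := BddAbove.mono (fun s hs => hs.1) bddAbove_Icc
  set ts : ℝ := sSup A with htsdef
  have htsA : ts ∈ A := hAclosed.csSup_mem hAne hAbdd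
  have hts0 : 0 ≤ ts := htsA.1.1
  have htsD : 0 ≤ D ts := htsA.2
  have htslt : ts < t₁ := by
    rcases lt_or_eq_of_le htsA.1.2 with h | h
    · exact h
    · exfalso; rw [h] at htsD; linarith
  have hderivpos : 0 < D' ts := hpos ts hts0 htsD
  -- slopes to the right are nonpositive
  have hslope : Filter.Tendsto (slope D ts) (nhdsWithin ts (Set.Ioi ts)) (nhds (D' ts)) := by
    have := ((hD ts).hasDerivWithinAt (s := Set.Ioi ts))
    rw [hasDerivWithinAt_iff_tendsto_slope] at this
    have hd : Set.Ioi ts \ {ts} = Set.Ioi ts := Set.diff_singleton_eq_self (by simp)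
    rwa [hd] at this
  have hnonpos : D' ts ≤ 0 := by
    apply le_of_tendsto hslope
    filter_upwards [Ioc_mem_nhdsGT_of_mem ⟨le_refl ts, htslt⟩] with s hs
    have hDs : D s < 0 := by
      by_contra hc
      push_neg at hc
      have : s ∈ A := ⟨⟨le_trans hts0 (le_of_lt hs.1), hs.2⟩, hc⟩
      exact absurd (le_csSup hAbdd this) (not_le.mpr hs.1)
    have hnum : D s - D ts < 0 := by linarith
    have hden : 0 < s - ts := by linarith [hs.1]
    rw [slope_def_field]
    exact le_of_lt (div_neg_of_neg_of_pos hnum hden)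
  linarith


set_option maxHeartbeats 2000000 in
/-- Fix `d ≥ 3`, `δ ∈ (0, 1/2)`, `a > 0`. Let `V : [0,∞) → ℝ^d` be a
differentiable solution of `dV_k/dt = a·V_k·(V_k² − Σᵢ Vᵢ⁴)` with `‖V(0)‖ = 1` and an index
`k₀` such that `V_{k₀}(0)² ≥ 2·V_k(0)²` for all `k ≠ k₀`. Then there exists `T ≥ 0` with
`V_{k₀}(T)² ≥ 1 − δ` and `T ≤ a⁻¹·(d − 3 + 4·log(1/(2δ)))`. -/
theorem stmt_14 {d : ℕ} (hd : 3 ≤ d) (δ a : ℝ) (hδ : δ ∈ Set.Ioo (0 : ℝ) (1 / 2))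
    (ha : 0 < a) (V : ℝ → EuclideanSpace ℝ (Fin d))
    (hODE : ∀ t ∈ Set.Ici (0 : ℝ), ∀ k : Fin d,
      HasDerivWithinAt (fun s => V s k)
        (a * V t k * ((V t k) ^ 2 - ∑ i, (V t i) ^ 4)) (Set.Ici 0) t)
    (hnorm : ‖V 0‖ = 1) (k₀ : Fin d)
    (hk₀ : ∀ k : Fin d, k ≠ k₀ → 2 * (V 0 k) ^ 2 ≤ (V 0 k₀) ^ 2) :
    ∃ T ≥ (0 : ℝ), 1 - δ ≤ (V T k₀) ^ 2 ∧
      T ≤ a⁻¹ * (d - 3 + 4 * Real.log (1 / (2 * δ))) := by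
  obtain ⟨hδ0, hδ2⟩ := hδ
  -- S : the quartic sum
  set S : ℝ → ℝ := fun t => ∑ i, (V t i) ^ 4 with hSdef
  -- continuity of components on [0,∞)
  have hVc : ∀ k, ContinuousOn (fun t => V t k) (Set.Ici 0) :=
    fun k t ht => (hODE t ht k).continuousWithinAt
  have hmaxc : Continuous (fun t : ℝ => max t 0) := continuous_id.max continuous_const
  have hWc : ∀ k, Continuous (fun t => V (max t 0) k) := fun k =>
    (hVc k).comp_continuous hmaxc (fun t => le_max_right t 0)
  have hStc : Continuous (fun t => ∑ i, (V (max t 0) i) ^ 4) :=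
    continuous_finset_sum _ (fun i _ => (hWc i).pow 4)
  have hmax : ∀ t : ℝ, 0 ≤ t → max t 0 = t := fun t ht => max_eq_left ht
  -- initial norm
  have hsum0 : ∑ i, (V 0 i) ^ 2 = 1 := by
    have h := hnorm
    rw [EuclideanSpace.norm_eq] at h
    have h2 : (Real.sqrt (∑ i, ‖V 0 i‖ ^ 2)) ^ 2 = 1 := by rw [h]; norm_num
    rw [Real.sq_sqrt (by positivity)] at h2
    simpa [Real.norm_eq_abs, sq_abs] using h2
  -- norm preservation : ∑ V t i ^ 2 = 1 for t ≥ 0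
  have hN : ∀ t ∈ Set.Ici (0:ℝ), ∑ i, (V t i) ^ 2 = 1 := by
    intro t ht
    set cN : ℝ → ℝ := fun u => -(2*a) * (∑ i, (V (max u 0) i) ^ 4) with hcNdef
    have hcNc : Continuous cN := continuous_const.mul hStc
    have hfd : ∀ u ∈ Set.Ici (0:ℝ), HasDerivWithinAt (fun y => (∑ i, (V y i) ^ 2) - 1)
        (cN u * ((∑ i, (V u i) ^ 2) - 1)) (Set.Ici 0) u := by
      intro u hu
      have hsum := HasDerivWithinAt.fun_sum (fun i (_ : i ∈ Finset.univ) => (hODE u hu i).pow 2)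
      have hder := hsum.sub_const 1
      convert hder using 1
      any_goals rfl
      rw [eq_comm]
      calc ∑ i, (2:ℕ) * V u i ^ (2-1) * (a * V u i * ((V u i) ^ 2 - ∑ j, (V u j) ^ 4))
          = ∑ i, (2*a*(V u i) ^ 4 - (2*a*(∑ j, (V u j) ^ 4))*(V u i) ^ 2) :=
            Finset.sum_congr rfl (fun i _ => by push_cast; ring)
        _ = 2*a*(∑ i, (V u i) ^ 4) - (2*a*(∑ j, (V u j) ^ 4))*(∑ i, (V u i) ^ 2) := by
            rw [Finset.sum_sub_distrib, ← Finset.mul_sum, ← Finset.mul_sum]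
        _ = cN u * ((∑ i, (V u i) ^ 2) - 1) := by
            simp only [hcNdef, hmax u hu]; ring
    have hconc := lin_ode hcNc hfd t ht
    simp only [hsum0, sub_self, zero_mul] at hconc
    linarith [hconc]
  -- exponential formula for components
  set c : Fin d → ℝ → ℝ :=
    fun k t => a * ((V (max t 0) k) ^ 2 - ∑ i, (V (max t 0) i) ^ 4) with hcdef
  have hcc : ∀ k, Continuous (c k) := fun k =>
    (continuous_const.mul (((hWc k).pow 2).sub hStc))
  have hVexp : ∀ k, ∀ t ∈ Set.Ici (0:ℝ),
      V t k = V 0 k * Real.exp (∫ s in (0:ℝ)..t, c k s) := by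
    intro k
    apply lin_ode (hcc k)
    intro u hu
    have h := hODE u hu k
    convert h using 1
    simp only [hcdef, hmax u hu]
    ring
  -- dominance preservation
  have hdom : ∀ t ∈ Set.Ici (0:ℝ), ∀ k, k ≠ k₀ → 2 * (V t k) ^ 2 ≤ (V t k₀) ^ 2 := by
    intro t ht k hk
    by_cases h0 : V 0 k = 0
    · have hz : V t k = 0 := by rw [hVexp k t ht, h0, zero_mul]
      rw [hz]
      simpa using sq_nonneg (V t k₀)
    · set D : ℝ → ℝ :=
        fun u => ∫ s in (0:ℝ)..u, ((V (max s 0) k₀) ^ 2 - (V (max s 0) k) ^ 2) with hDdef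
      have hDic : Continuous fun s : ℝ => (V (max s 0) k₀) ^ 2 - (V (max s 0) k) ^ 2 :=
        ((hWc k₀).pow 2).sub ((hWc k).pow 2)
      have hDd : ∀ u, HasDerivAt D ((V (max u 0) k₀) ^ 2 - (V (max u 0) k) ^ 2) u :=
        fun u => (hDic.integral_hasStrictDerivAt 0 u).hasDerivAt
      have hD0 : D 0 = 0 := by simp [hDdef]
      have hrel : ∀ u : ℝ,
          (∫ s in (0:ℝ)..u, c k₀ s) - (∫ s in (0:ℝ)..u, c k s) = a * D u := by
        intro u
        rw [← intervalIntegral.integral_sub ((hcc k₀).intervalIntegrable 0 u)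
          ((hcc k).intervalIntegrable 0 u), hDdef, ← intervalIntegral.integral_const_mul]
        apply intervalIntegral.integral_congr
        intro s _
        simp only [hcdef]
        ring
      have hk2 : 2 * (V 0 k) ^ 2 ≤ (V 0 k₀) ^ 2 := hk₀ k hk
      have hkpos : 0 < (V 0 k) ^ 2 :=
        lt_of_le_of_ne (sq_nonneg _) (Ne.symm (pow_ne_zero 2 h0))
      have hDpos : ∀ u, 0 ≤ u → 0 ≤ D u := by
        apply nonneg_of_deriv_pos hDd hD0
        intro u hu hDu
        simp only [hmax u hu]
        have e₀ := hVexp k₀ u (by exact hu)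
        have e := hVexp k u (by exact hu)
        set x := ∫ s in (0:ℝ)..u, c k₀ s with hxdef
        set y := ∫ s in (0:ℝ)..u, c k s with hydef
        have hxy : y ≤ x := by
          have h := hrel u
          have := mul_nonneg ha.le hDu
          linarith
        have hexp : Real.exp y ≤ Real.exp x := Real.exp_le_exp.mpr hxy
        have hey : 0 < Real.exp y := Real.exp_pos y
        have hx2 : (Real.exp y) ^ 2 ≤ (Real.exp x) ^ 2 := by nlinarith
        have key : 2 * (V 0 k) ^ 2 * (Real.exp y) ^ 2 ≤ (V 0 k₀) ^ 2 * (Real.exp x) ^ 2 := by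
          have := mul_le_mul hk2 hx2 (by positivity) (sq_nonneg (V 0 k₀))
          linarith
        have hp : 0 < (V 0 k) ^ 2 * (Real.exp y) ^ 2 :=
          mul_pos hkpos (pow_pos hey 2)
        rw [e₀, e]
        nlinarith [key, hp]
      -- conclude dominance at time t
      have e₀ := hVexp k₀ t ht
      have e := hVexp k t ht
      set x := ∫ s in (0:ℝ)..t, c k₀ s with hxdef
      set y := ∫ s in (0:ℝ)..t, c k s with hydef
      have hxy : y ≤ x := by
        have h := hrel t
        have := mul_nonneg ha.le (hDpos t ht)
        linarith
      have hexp : Real.exp y ≤ Real.exp x := Real.exp_le_exp.mpr hxy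
      have hey : 0 < Real.exp y := Real.exp_pos y
      have hx2 : (Real.exp y) ^ 2 ≤ (Real.exp x) ^ 2 := by nlinarith
      rw [e₀, e]
      have key : 2 * (V 0 k) ^ 2 * (Real.exp y) ^ 2 ≤ (V 0 k₀) ^ 2 * (Real.exp x) ^ 2 := by
        have := mul_le_mul hk2 hx2 (by positivity) (sq_nonneg (V 0 k₀))
        linarith
      nlinarith [key]
  -- m and its properties
  set m : ℝ → ℝ := fun t => (V t k₀) ^ 2 with hmdef
  have hm0 : 2 / ((d:ℝ) + 1) ≤ m 0 := by
    have h1 : m 0 + ∑ i ∈ Finset.univ.erase k₀, (V 0 i) ^ 2 = 1 :=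
      (Finset.add_sum_erase Finset.univ (fun i => (V 0 i) ^ 2)
        (Finset.mem_univ k₀)).trans hsum0
    have h2 : ∑ i ∈ Finset.univ.erase k₀, (V 0 i) ^ 2 ≤ ((d:ℝ) - 1) * (m 0 / 2) := by
      have hb := Finset.sum_le_card_nsmul (Finset.univ.erase k₀) (fun i => (V 0 i) ^ 2)
        (m 0 / 2) (fun i hi => by
          have := hk₀ i (Finset.ne_of_mem_erase hi)
          simp only [hmdef]
          linarith)
      have hcard : (Finset.univ.erase k₀).card = d - 1 := by
        rw [Finset.card_erase_of_mem (Finset.mem_univ k₀), Finset.card_univ, Fintype.card_fin]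
      rw [hcard, nsmul_eq_mul, Nat.cast_sub (by omega)] at hb
      simpa using hb
    have hd3' : (3:ℝ) ≤ (d:ℝ) := by exact_mod_cast hd
    rw [div_le_iff₀ (by positivity : (0:ℝ) < (d:ℝ) + 1)]
    nlinarith [h1, h2]
  have hd3 : (3:ℝ) ≤ (d:ℝ) := by exact_mod_cast hd
  have hm0pos : 0 < m 0 := lt_of_lt_of_le (by positivity) hm0
  have hmpos : ∀ t ∈ Set.Ici (0:ℝ), 0 < m t := by
    intro t ht
    have := hVexp k₀ t ht
    have h2 : m t = m 0 * (Real.exp (∫ s in (0:ℝ)..t, c k₀ s)) ^ 2 := by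
      rw [hmdef]; simp only; rw [this]; ring
    rw [h2]; positivity
  have hmle1 : ∀ t ∈ Set.Ici (0:ℝ), m t ≤ 1 := by
    intro t ht
    rw [← hN t ht]
    exact Finset.single_le_sum (fun i _ => sq_nonneg (V t i)) (Finset.mem_univ k₀)
  have hmderiv : ∀ t ∈ Set.Ici (0:ℝ),
      HasDerivWithinAt m (2 * a * m t * (m t - S t)) (Set.Ici 0) t := by
    intro t ht
    have h := (hODE t ht k₀).pow 2
    convert h using 1
    any_goals rfl
    simp [hmdef, hSdef]; ring
  have hmlb : ∀ t ∈ Set.Ici (0:ℝ),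
      a * (m t) ^ 2 * (1 - m t) ≤ 2 * a * m t * (m t - S t) := by
    intro t ht
    have hmt := hmpos t ht
    have hs : S t ≤ (m t) ^ 2 + (m t / 2) * (1 - m t) := by
      have hsplit : (V t k₀) ^ 4 + ∑ i ∈ Finset.univ.erase k₀, (V t i) ^ 4 = S t := by
        simp only [hSdef]
        exact Finset.add_sum_erase Finset.univ (fun i => (V t i) ^ 4) (Finset.mem_univ k₀)
      have hsplit2 : (V t k₀) ^ 2 + ∑ i ∈ Finset.univ.erase k₀, (V t i) ^ 2 = 1 :=
        (Finset.add_sum_erase Finset.univ (fun i => (V t i) ^ 2)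
          (Finset.mem_univ k₀)).trans (hN t ht)
      have hterm : ∀ i ∈ Finset.univ.erase k₀, (V t i) ^ 4 ≤ (m t / 2) * (V t i) ^ 2 := by
        intro i hi
        have hdm := hdom t ht i (Finset.ne_of_mem_erase hi)
        have h4 : (V t i) ^ 4 = (V t i) ^ 2 * (V t i) ^ 2 := by ring
        rw [h4]
        apply mul_le_mul_of_nonneg_right _ (sq_nonneg _)
        simp only [hmdef]
        linarith
      have hsum := Finset.sum_le_sum hterm
      rw [← Finset.mul_sum] at hsum
      have he2 : ∑ i ∈ Finset.univ.erase k₀, (V t i) ^ 2 = 1 - m t := by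
        simp only [hmdef] at hsplit2 ⊢
        linarith
      rw [he2] at hsum
      have hm4 : (V t k₀) ^ 4 = (m t) ^ 2 := by simp only [hmdef]; ring
      linarith [hsplit, hsum, hm4.le, hm4.ge]
    have hid : m t - ((m t) ^ 2 + (m t / 2) * (1 - m t)) = m t / 2 * (1 - m t) := by ring
    have hsub : m t / 2 * (1 - m t) ≤ m t - S t := by linarith
    have hmul := mul_le_mul_of_nonneg_left hsub
      (mul_nonneg (by positivity : (0:ℝ) ≤ 2 * a) hmt.le)
    calc a * (m t) ^ 2 * (1 - m t) = 2 * a * m t * (m t / 2 * (1 - m t)) := by ring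
      _ ≤ 2 * a * m t * (m t - S t) := by
          calc 2 * a * m t * (m t / 2 * (1 - m t)) = 2 * a * m t * (m t / 2 * (1 - m t)) := rfl
            _ ≤ 2 * a * m t * (m t - S t) := hmul
  have hmderivnn : ∀ t ∈ Set.Ici (0:ℝ), 0 ≤ 2 * a * m t * (m t - S t) := by
    intro t ht
    refine le_trans ?_ (hmlb t ht)
    have h1 := hmpos t ht
    have h2 := hmle1 t ht
    have h3 : 0 ≤ 1 - m t := by linarith
    have h4 := mul_nonneg (mul_nonneg (mul_nonneg ha.le h1.le) (sq_nonneg (m t))) h3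
    nlinarith [h4]
  have hmmono : ∀ x y : ℝ, 0 ≤ x → x ≤ y → m x ≤ m y := by
    intro x y hx hxy
    exact mono_of_deriv hx hxy
      (fun t ht => hmderiv t (le_trans hx ht.1))
      (fun t ht => hmderivnn t (le_trans hx ht.1))
  -- the two phases
  set T₁ : ℝ := a⁻¹ * ((d:ℝ) - 3) with hT₁def
  set T : ℝ := a⁻¹ * ((d:ℝ) - 3 + 4 * Real.log (1 / (2 * δ))) with hTdef
  have hloggt : 0 ≤ Real.log (1 / (2 * δ)) := by
    apply Real.log_nonneg
    rw [le_one_div (by linarith) (by linarith)]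
    linarith
  have hT₁0 : 0 ≤ T₁ := by
    apply mul_nonneg (le_of_lt (inv_pos.mpr ha)); linarith
  have hT₁T : T₁ ≤ T := by
    apply mul_le_mul_of_nonneg_left _ (le_of_lt (inv_pos.mpr ha)); linarith
  have hT0 : 0 ≤ T := le_trans hT₁0 hT₁T
  have haT₁ : a * T₁ = (d:ℝ) - 3 := by
    rw [hT₁def, ← mul_assoc, mul_inv_cancel₀ (ne_of_gt ha), one_mul]
  have haT : a * (T - T₁) = 4 * Real.log (1 / (2 * δ)) := by
    rw [hTdef, hT₁def, ← mul_sub, ← mul_assoc, mul_inv_cancel₀ (ne_of_gt ha), one_mul]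
    ring
  -- phase 1
  have hhalf : 1/2 ≤ m T₁ := by
    by_contra hcon
    push_neg at hcon
    have hsmall : ∀ t ∈ Set.Icc (0:ℝ) T₁, m t ≤ 1/2 := fun t htI =>
      le_of_lt (lt_of_le_of_lt (hmmono t T₁ htI.1 htI.2) hcon)
    have hg1d : ∀ t ∈ Set.Icc (0:ℝ) T₁,
        HasDerivWithinAt (fun u => -2 * (m u)⁻¹ - a * u)
          (-2 * (-(2 * a * m t * (m t - S t)) / (m t) ^ 2) - a) (Set.Ici 0) t := by
      intro t htI
      have hinv := (hmderiv t htI.1).inv (ne_of_gt (hmpos t htI.1))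
      have hlin : HasDerivWithinAt (fun u : ℝ => a * u) a (Set.Ici 0) t := by
        simpa using (hasDerivWithinAt_id t (Set.Ici 0)).const_mul a
      exact (hinv.const_mul (-2)).sub hlin
    have hg1pos : ∀ t ∈ Set.Icc (0:ℝ) T₁,
        0 ≤ -2 * (-(2 * a * m t * (m t - S t)) / (m t) ^ 2) - a := by
      intro t htI
      have hp := hmpos t htI.1
      have hlb := hmlb t htI.1
      have h12 := hsmall t htI
      have key : a * (m t) ^ 2 ≤ 2 * (2 * a * m t * (m t - S t)) := by
        have hfac : 0 ≤ a * (m t) ^ 2 * (1 - 2 * m t) :=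
          mul_nonneg (mul_nonneg ha.le (sq_nonneg (m t))) (by linarith)
        nlinarith [hlb, hfac]
      have hrw : -2 * (-(2 * a * m t * (m t - S t)) / (m t) ^ 2) - a
          = (2 * (2 * a * m t * (m t - S t)) - a * (m t) ^ 2) / (m t) ^ 2 := by
        field_simp
      rw [hrw]
      exact div_nonneg (by linarith) (sq_nonneg (m t))
    have hmono1 := mono_of_deriv (le_refl (0:ℝ)) hT₁0 hg1d hg1pos
    have hinv0 : (m 0)⁻¹ ≤ ((d:ℝ) + 1) / 2 := by
      have h1 : (0:ℝ) < 2 / ((d:ℝ) + 1) := by positivity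
      have h2 := inv_anti₀ h1 hm0
      rwa [inv_div] at h2
    have hmT₁pos := hmpos T₁ hT₁0
    have hfin : (m T₁)⁻¹ ≤ 2 := by
      have e0 : -2 * (m 0)⁻¹ - a * 0 = -2 * (m 0)⁻¹ := by ring
      rw [e0] at hmono1
      linarith [hmono1, hinv0, haT₁]
    have hmul := mul_le_mul_of_nonneg_left hfin hmT₁pos.le
    rw [mul_inv_cancel₀ (ne_of_gt hmT₁pos)] at hmul
    linarith
  -- phase 2
  have hfinal : 1 - δ ≤ m T := by
    by_contra hcon
    push_neg at hcon
    have hup : ∀ t ∈ Set.Icc T₁ T, m t < 1 - δ := fun t htI =>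
      lt_of_le_of_lt (hmmono t T (le_trans hT₁0 htI.1) htI.2) hcon
    have hlo : ∀ t ∈ Set.Icc T₁ T, 1/2 ≤ m t := fun t htI =>
      le_trans hhalf (hmmono T₁ t hT₁0 htI.1)
    have h1mpos : ∀ t ∈ Set.Icc T₁ T, 0 < 1 - m t := by
      intro t htI
      have := hup t htI
      linarith
    have hg2d : ∀ t ∈ Set.Icc T₁ T,
        HasDerivWithinAt (fun u => -4 * Real.log (1 - m u) - a * u)
          (-4 * (-(2 * a * m t * (m t - S t)) / (1 - m t)) - a) (Set.Ici 0) t := by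
      intro t htI
      have ht0 : (0:ℝ) ≤ t := le_trans hT₁0 htI.1
      have h1m := (hmderiv t ht0).const_sub 1
      have hlog := h1m.log (ne_of_gt (h1mpos t htI))
      have hlin : HasDerivWithinAt (fun u : ℝ => a * u) a (Set.Ici 0) t := by
        simpa using (hasDerivWithinAt_id t (Set.Ici 0)).const_mul a
      exact (hlog.const_mul (-4)).sub hlin
    have hg2pos : ∀ t ∈ Set.Icc T₁ T,
        0 ≤ -4 * (-(2 * a * m t * (m t - S t)) / (1 - m t)) - a := by
      intro t htI
      have ht0 : (0:ℝ) ≤ t := le_trans hT₁0 htI.1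
      have hlb := hmlb t ht0
      have h1m := h1mpos t htI
      have hm12 := hlo t htI
      have key : a * (1 - m t) ≤ 4 * (2 * a * m t * (m t - S t)) := by
        have hfac : 0 ≤ a * (4 * (m t) ^ 2 - 1) * (1 - m t) :=
          mul_nonneg (mul_nonneg ha.le (by nlinarith)) h1m.le
        nlinarith [hlb, hfac]
      have hrw : -4 * (-(2 * a * m t * (m t - S t)) / (1 - m t)) - a
          = (4 * (2 * a * m t * (m t - S t)) - a * (1 - m t)) / (1 - m t) := by
        field_simp
      rw [hrw]
      exact div_nonneg (by linarith) h1m.le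
    have hmono2 := mono_of_deriv hT₁0 hT₁T hg2d hg2pos
    have h1mT : 0 < 1 - m T := h1mpos T ⟨hT₁T, le_refl T⟩
    have h1mT₁ : 0 < 1 - m T₁ := h1mpos T₁ ⟨le_refl T₁, hT₁T⟩
    have hlogT₁ : Real.log (1 - m T₁) ≤ Real.log (1/2) :=
      (Real.log_le_log_iff h1mT₁ (by norm_num)).mpr (by linarith)
    have hL : Real.log (1 / (2 * δ)) = -(Real.log 2 + Real.log δ) := by
      rw [one_div, Real.log_inv, Real.log_mul (by norm_num) (ne_of_gt hδ0)]
    have hhalflog : Real.log (1/2) = -Real.log 2 := by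
      rw [one_div, Real.log_inv]
    have hfin : Real.log (1 - m T) ≤ Real.log δ := by
      have := hmono2
      rw [hhalflog] at hlogT₁
      -- hmono2 : -4 log(1-m T₁) - a T₁ ≤ -4 log(1-m T) - a T
      -- haT : a*(T - T₁) = 4 * log(1/(2δ))
      rw [hL] at haT
      nlinarith [hmono2, hlogT₁, haT]
    have hcontr : 1 - m T ≤ δ := (Real.log_le_log_iff h1mT hδ0).mp hfin
    linarith
  exact ⟨T, hT0, hfinal, le_refl T⟩
end

section
/- Let a > 0 and C ≥ 0, and define f : [0,∞) → ℝ by f(t) = 1/2 + (1/2)·(1 + C·e^{−at})^{−1/2}. Then f is differentiable and satisfies f'(t) = −2a·f(t)·(f(t) − 1/2)·(f(t) − 1) for all t ≥ 0; the same holds for g(t) = 1/2 − (1/2)·(1 + C·e^{−at})^{−1/2}. -/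
/-- Let `a > 0`, `C ≥ 0`, and `f(t) = 1/2 + (1/2)(1 + C·e^{−at})^{−1/2}`,
`g(t) = 1/2 − (1/2)(1 + C·e^{−at})^{−1/2}`. Then on `[0,∞)` both `f` and `g` are
differentiable with `f'(t) = −2a·f(t)·(f(t) − 1/2)·(f(t) − 1)` and likewise for `g`. -/
theorem stmt_15 (a C : ℝ) (ha : 0 < a) (hC : 0 ≤ C) (f g : ℝ → ℝ)
    (hf : ∀ t, f t = 1 / 2 + 1 / 2 * (1 + C * Real.exp (-a * t)) ^ (-(1 / 2) : ℝ))
    (hg : ∀ t, g t = 1 / 2 - 1 / 2 * (1 + C * Real.exp (-a * t)) ^ (-(1 / 2) : ℝ)) :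
    ∀ t ≥ (0 : ℝ),
      HasDerivAt f (-2 * a * f t * (f t - 1 / 2) * (f t - 1)) t ∧
      HasDerivAt g (-2 * a * g t * (g t - 1 / 2) * (g t - 1)) t := by
  intro t ht
  set e : ℝ := Real.exp (-a * t) with he
  set u : ℝ := 1 + C * e with hu_def
  have hepos : 0 < e := Real.exp_pos _
  have hu : 0 < u := by positivity
  set v : ℝ := u ^ (-(1 / 2) : ℝ) with hv_def
  -- derivative of inner function
  have h1 : HasDerivAt (fun t : ℝ => -a * t) (-a) t := by
    simpa using (hasDerivAt_id t).const_mul (-a)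
  have h2 : HasDerivAt (fun t : ℝ => Real.exp (-a * t)) (e * (-a)) t := h1.exp
  have h3 : HasDerivAt (fun t : ℝ => 1 + C * Real.exp (-a * t)) (C * (e * (-a))) t :=
    (h2.const_mul C).const_add 1
  have h4 : HasDerivAt (fun t : ℝ => (1 + C * Real.exp (-a * t)) ^ (-(1 / 2) : ℝ))
      (C * (e * (-a)) * (-(1 / 2) : ℝ) * u ^ ((-(1 / 2) : ℝ) - 1)) t :=
    h3.rpow_const (Or.inl hu.ne')
  -- algebraic identities
  have hv2 : v * v = u⁻¹ := by
    rw [hv_def, ← Real.rpow_add hu, show (-(1/2) : ℝ) + (-(1/2)) = -1 by ring,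
      Real.rpow_neg_one]
  have hsplit : u ^ ((-(1 / 2) : ℝ) - 1) = v * u⁻¹ := by
    rw [show ((-(1/2) : ℝ) - 1) = (-(1/2)) + (-1) by ring, Real.rpow_add hu,
      Real.rpow_neg_one, hv_def]
  have hCe : C * e = u - 1 := by rw [hu_def]; ring
  have hinv : u * u⁻¹ = 1 := mul_inv_cancel₀ hu.ne'
  have hkey : (1 : ℝ) / 2 * (C * (e * (-a)) * (-(1 / 2) : ℝ) * u ^ ((-(1 / 2) : ℝ) - 1))
      = -2 * a * (1 / 2 + 1 / 2 * v) * (1 / 2 + 1 / 2 * v - 1 / 2) * (1 / 2 + 1 / 2 * v - 1) := by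
    rw [hsplit]
    linear_combination (a / 4 * v * u⁻¹) * hCe + (a / 4 * v) * hv2 + (a / 4 * v) * hinv
  have hkey2 : -((1 : ℝ) / 2 * (C * (e * (-a)) * (-(1 / 2) : ℝ) * u ^ ((-(1 / 2) : ℝ) - 1)))
      = -2 * a * (1 / 2 - 1 / 2 * v) * (1 / 2 - 1 / 2 * v - 1 / 2) * (1 / 2 - 1 / 2 * v - 1) := by
    rw [hsplit]
    linear_combination (-(a / 4 * v * u⁻¹)) * hCe + (-(a / 4 * v)) * hv2 + (-(a / 4 * v)) * hinv
  constructor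
  · have hfeq : f = fun t => 1 / 2 + 1 / 2 * (1 + C * Real.exp (-a * t)) ^ (-(1 / 2) : ℝ) :=
      funext hf
    rw [hf t]
    rw [hfeq]
    have h5 : HasDerivAt (fun t : ℝ => 1 / 2 + 1 / 2 * (1 + C * Real.exp (-a * t)) ^ (-(1 / 2) : ℝ))
        (1 / 2 * (C * (e * (-a)) * (-(1 / 2) : ℝ) * u ^ ((-(1 / 2) : ℝ) - 1))) t :=
      (h4.const_mul (1 / 2)).const_add (1 / 2)
    convert h5 using 1
    rw [hkey]
  · have hgeq : g = fun t => 1 / 2 - 1 / 2 * (1 + C * Real.exp (-a * t)) ^ (-(1 / 2) : ℝ) :=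
      funext hg
    rw [hg t]
    rw [hgeq]
    have h5 : HasDerivAt (fun t : ℝ => 1 / 2 - 1 / 2 * (1 + C * Real.exp (-a * t)) ^ (-(1 / 2) : ℝ))
        (-(1 / 2 * (C * (e * (-a)) * (-(1 / 2) : ℝ) * u ^ ((-(1 / 2) : ℝ) - 1)))) t :=
      (h4.const_mul (1 / 2)).const_sub (1 / 2)
    convert h5 using 1
    rw [← hkey2]
end

section
/- For each k ∈ {1,…,d}, E[(Σ_{i=1}^d Yᵢ)⁶ · Y_k²] = ψ₈ + 16(d − 1)·ψ₆ + 15(d − 1)·ψ₄² + 60(d − 1)(d − 2)·ψ₄ + 15(d − 1)(d − 2)(d − 3). -/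
open MeasureTheory ProbabilityTheory

lemma aux_integrable_pow {Ω : Type*} [MeasurableSpace Ω] {μ : Measure Ω} [IsProbabilityMeasure μ]
    {f : Ω → ℝ} (hf : MemLp f 8 μ) (n : ℕ) (hn : n ≤ 8) :
    Integrable (fun ω => f ω ^ n) μ := by
  have h8 : Integrable (fun ω => ‖f ω‖ ^ (8 : ℝ)) μ :=
    hf.integrable_norm_rpow (by norm_num) (by norm_num)
  have h8' : Integrable (fun ω => |f ω| ^ (8 : ℕ)) μ := by
    have : ∀ ω, ‖f ω‖ ^ (8 : ℝ) = |f ω| ^ (8 : ℕ) := by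
      intro ω
      rw [Real.norm_eq_abs, show ((8:ℝ)) = ((8:ℕ):ℝ) by norm_num, Real.rpow_natCast]
    rw [show (fun ω => |f ω| ^ (8:ℕ)) = (fun ω => ‖f ω‖ ^ (8:ℝ)) from funext fun ω => (this ω).symm]
    exact h8
  refine Integrable.mono' ((integrable_const 1).add h8') ?_ ?_
  · exact (hf.aestronglyMeasurable.aemeasurable.pow_const n).aestronglyMeasurable
  · refine Filter.Eventually.of_forall fun ω => ?_
    have h0 : ‖f ω ^ n‖ = |f ω| ^ n := by rw [Real.norm_eq_abs, abs_pow]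
    rw [h0]
    rcases le_or_gt |f ω| 1 with h | h
    · have h1 : |f ω| ^ n ≤ 1 := pow_le_one₀ (abs_nonneg _) h
      have h2 : (0:ℝ) ≤ |f ω| ^ (8:ℕ) := by positivity
      simp only [Pi.add_apply]; linarith
    · have h1 : |f ω| ^ n ≤ |f ω| ^ (8:ℕ) := pow_le_pow_right₀ h.le hn
      simp only [Pi.add_apply]; linarith

/-- For each `k`,
`E[(Σᵢ Yᵢ)⁶·Y_k²] = ψ₈ + 16(d−1)ψ₆ + 15(d−1)ψ₄² + 60(d−1)(d−2)ψ₄ + 15(d−1)(d−2)(d−3)`,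
where `Y` has independent coordinates, symmetric about 0, mean 0, variance 1, identical
moments `ψ₄, ψ₆, ψ₈` up to order 8. -/
theorem stmt_16 {Ω : Type*} [MeasurableSpace Ω] (μ : Measure Ω) [IsProbabilityMeasure μ]
    {d : ℕ} (Y : Fin d → Ω → ℝ) (ψ₄ ψ₆ ψ₈ : ℝ)
    (hmeas : ∀ i, Measurable (Y i))
    (hindep : iIndepFun Y μ)
    (hsymm : ∀ i, μ.map (Y i) = μ.map (fun ω => -Y i ω))
    (hL8 : ∀ i, MemLp (Y i) 8 μ)
    (hmean : ∀ i, ∫ ω, Y i ω ∂μ = 0)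
    (hvar : ∀ i, ∫ ω, (Y i ω) ^ 2 ∂μ = 1)
    (hm4 : ∀ i, ∫ ω, (Y i ω) ^ 4 ∂μ = ψ₄)
    (hm6 : ∀ i, ∫ ω, (Y i ω) ^ 6 ∂μ = ψ₆)
    (hm8 : ∀ i, ∫ ω, (Y i ω) ^ 8 ∂μ = ψ₈)
    (k : Fin d) :
    ∫ ω, (∑ i, Y i ω) ^ 6 * (Y k ω) ^ 2 ∂μ
      = ψ₈ + 16 * (d - 1) * ψ₆ + 15 * (d - 1) * ψ₄ ^ 2
        + 60 * (d - 1) * (d - 2) * ψ₄ + 15 * (d - 1) * (d - 2) * (d - 3) := by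
  -- odd moments vanish
  have hodd : ∀ (i : Fin d) (n : ℕ), Odd n → ∫ ω, Y i ω ^ n ∂μ = 0 := by
    intro i n hn
    have hsm : AEStronglyMeasurable (fun x : ℝ => x ^ n) (μ.map (Y i)) :=
      (measurable_id.pow_const n).aestronglyMeasurable
    have h1 : ∫ ω, Y i ω ^ n ∂μ = ∫ x, x ^ n ∂(μ.map (Y i)) :=
      (integral_map (hmeas i).aemeasurable hsm).symm
    have hsm2 : AEStronglyMeasurable (fun x : ℝ => x ^ n) (μ.map (fun ω => -Y i ω)) :=
      (measurable_id.pow_const n).aestronglyMeasurable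
    have h2 : ∫ x, x ^ n ∂(μ.map (fun ω => -Y i ω)) = ∫ ω, (-Y i ω) ^ n ∂μ :=
      integral_map (hmeas i).neg.aemeasurable hsm2
    have h3 : ∫ ω, (-Y i ω) ^ n ∂μ = - ∫ ω, Y i ω ^ n ∂μ := by
      simp_rw [hn.neg_pow]
      exact integral_neg _
    rw [hsymm i, h2, h3] at h1
    linarith
  -- the key expansion lemma
  have key : ∀ (a : Fin d) (s : Finset (Fin d)), a ∉ s → ∀ m p : ℕ, m + p ≤ 8 →
      ∫ ω, (Y a ω + ∑ i ∈ s, Y i ω) ^ m * Y a ω ^ p ∂μ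
        = ∑ j ∈ Finset.range (m+1), (m.choose j : ℝ) * (∫ ω, Y a ω ^ (j+p) ∂μ)
            * (∫ ω, (∑ i ∈ s, Y i ω) ^ (m-j) ∂μ) := by
    intro a s ha m p hmp
    have hTL : MemLp (fun ω => ∑ i ∈ s, Y i ω) 8 μ :=
      memLp_finset_sum s fun i _ => hL8 i
    have hind0 : IndepFun (Y a) (fun ω => ∑ i ∈ s, Y i ω) μ := by
      have h := (hindep.indepFun_finset_sum_of_notMem hmeas ha).symm
      have e : (∑ j ∈ s, Y j) = fun ω => ∑ j ∈ s, Y j ω := by funext ω; simp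
      rwa [e] at h
    have hind : ∀ u v : ℕ,
        IndepFun (fun ω => Y a ω ^ u) (fun ω => (∑ i ∈ s, Y i ω) ^ v) μ :=
      fun u v => hind0.comp (measurable_id.pow_const u) (measurable_id.pow_const v)
    have hYi : ∀ n, n ≤ 8 → Integrable (fun ω => Y a ω ^ n) μ :=
      fun n hn => aux_integrable_pow (hL8 a) n hn
    have hTi : ∀ n, n ≤ 8 → Integrable (fun ω => (∑ i ∈ s, Y i ω) ^ n) μ :=
      fun n hn => aux_integrable_pow hTL n hn
    have hpt : ∀ ω, (Y a ω + ∑ i ∈ s, Y i ω) ^ m * Y a ω ^ p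
        = ∑ j ∈ Finset.range (m+1),
            (Y a ω ^ (j+p) * (∑ i ∈ s, Y i ω) ^ (m-j)) * (m.choose j : ℝ) := by
      intro ω
      rw [add_pow, Finset.sum_mul]
      refine Finset.sum_congr rfl fun j hj => ?_
      rw [pow_add]; ring
    simp_rw [hpt]
    rw [integral_finset_sum]
    · refine Finset.sum_congr rfl fun j hj => ?_
      have hj' : j ≤ m := Nat.lt_succ_iff.mp (Finset.mem_range.mp hj)
      rw [integral_mul_const]
      have hmul : ∫ ω, Y a ω ^ (j+p) * (∑ i ∈ s, Y i ω) ^ (m-j) ∂μ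
          = (∫ ω, Y a ω ^ (j+p) ∂μ) * ∫ ω, (∑ i ∈ s, Y i ω) ^ (m-j) ∂μ :=
        (hind (j+p) (m-j)).integral_mul_eq_mul_integral (hYi (j+p) (by omega)).aestronglyMeasurable
          (hTi (m-j) (by omega)).aestronglyMeasurable
      rw [hmul]; ring
    · intro j hj
      have hj' : j ≤ m := Nat.lt_succ_iff.mp (Finset.mem_range.mp hj)
      exact ((hind (j+p) (m-j)).integrable_mul (hYi (j+p) (by omega))
        (hTi (m-j) (by omega))).mul_const _
  -- moments of partial sums
  have hT : ∀ s : Finset (Fin d),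
      (∫ ω, (∑ i ∈ s, Y i ω) ^ 1 ∂μ = 0) ∧
      (∫ ω, (∑ i ∈ s, Y i ω) ^ 2 ∂μ = s.card) ∧
      (∫ ω, (∑ i ∈ s, Y i ω) ^ 3 ∂μ = 0) ∧
      (∫ ω, (∑ i ∈ s, Y i ω) ^ 4 ∂μ = s.card * ψ₄ + 3 * s.card * (s.card - 1)) ∧
      (∫ ω, (∑ i ∈ s, Y i ω) ^ 5 ∂μ = 0) ∧
      (∫ ω, (∑ i ∈ s, Y i ω) ^ 6 ∂μ
        = s.card * ψ₆ + 15 * s.card * (s.card - 1) * ψ₄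
          + 15 * s.card * (s.card - 1) * (s.card - 2)) := by
    intro s
    induction s using Finset.induction_on with
    | empty => norm_num
    | @insert a s ha ih =>
      obtain ⟨ih1, ih2, ih3, ih4, ih5, ih6⟩ := ih
      have hins : ∀ ω, ∑ i ∈ insert a s, Y i ω = Y a ω + ∑ i ∈ s, Y i ω :=
        fun ω => Finset.sum_insert ha
      have hcard : (((insert a s).card : ℕ) : ℝ) = (s.card : ℝ) + 1 := by
        rw [Finset.card_insert_of_notMem ha]; push_cast; ring
      have key0 : ∀ m : ℕ, m ≤ 8 →
          ∫ ω, (Y a ω + ∑ i ∈ s, Y i ω) ^ m ∂μ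
            = ∑ j ∈ Finset.range (m+1), (m.choose j : ℝ) * (∫ ω, Y a ω ^ j ∂μ)
                * (∫ ω, (∑ i ∈ s, Y i ω) ^ (m-j) ∂μ) := by
        intro m hm
        have h := key a s ha m 0 (by omega)
        simpa using h
      have h3 := hodd a 3 ⟨1, by norm_num⟩
      have h5 := hodd a 5 ⟨2, by norm_num⟩
      have hm1p : ∫ ω, Y a ω ^ 1 ∂μ = 0 := by simp only [pow_one]; exact hmean a
      have hv := hvar a
      have h4 := hm4 a
      have h6 := hm6 a
      have hY0 : ∫ ω, Y a ω ^ 0 ∂μ = 1 := by simp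
      have hT0 : ∫ ω, (∑ i ∈ s, Y i ω) ^ 0 ∂μ = 1 := by simp
      refine ⟨?_, ?_, ?_, ?_, ?_, ?_⟩ <;> simp_rw [hins]
      · rw [key0 1 (by norm_num)]
        simp only [Finset.sum_range_succ, Finset.sum_range_zero, Nat.reduceAdd, Nat.reduceSub]
        rw [hY0, hm1p, ih1, hT0]
        norm_num
      · rw [key0 2 (by norm_num)]
        simp only [Finset.sum_range_succ, Finset.sum_range_zero, Nat.reduceAdd, Nat.reduceSub]
        rw [hY0, hm1p, hv, ih1, ih2, hT0, hcard]
        norm_num [Nat.choose]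
      · rw [key0 3 (by norm_num)]
        simp only [Finset.sum_range_succ, Finset.sum_range_zero, Nat.reduceAdd, Nat.reduceSub]
        rw [hY0, hm1p, hv, h3, ih1, ih2, ih3, hT0]
        norm_num
      · rw [key0 4 (by norm_num)]
        simp only [Finset.sum_range_succ, Finset.sum_range_zero, Nat.reduceAdd, Nat.reduceSub]
        rw [hY0, hm1p, hv, h3, h4, ih1, ih2, ih3, ih4, hT0, hcard]
        norm_num [Nat.choose]
        try ring
      · rw [key0 5 (by norm_num)]
        simp only [Finset.sum_range_succ, Finset.sum_range_zero, Nat.reduceAdd, Nat.reduceSub]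
        rw [hY0, hm1p, hv, h3, h4, h5, ih1, ih2, ih3, ih4, ih5, hT0]
        norm_num [Nat.choose]
        try ring
      · rw [key0 6 (by norm_num)]
        simp only [Finset.sum_range_succ, Finset.sum_range_zero, Nat.reduceAdd, Nat.reduceSub]
        rw [hY0, hm1p, hv, h3, h4, h5, h6, ih1, ih2, ih3, ih4, ih5, ih6, hT0, hcard]
        norm_num [Nat.choose]
        try ring
  -- conclusion
  have hkerase : k ∉ Finset.univ.erase k := Finset.notMem_erase k _
  have hsum : ∀ ω, ∑ i, Y i ω = Y k ω + ∑ i ∈ Finset.univ.erase k, Y i ω :=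
    fun ω => (Finset.add_sum_erase _ _ (Finset.mem_univ k)).symm
  obtain ⟨e1, e2, e3, e4, e5, e6⟩ := hT (Finset.univ.erase k)
  have hc : (((Finset.univ.erase k).card : ℕ) : ℝ) = (d : ℝ) - 1 := by
    rw [Finset.card_erase_of_mem (Finset.mem_univ k), Finset.card_univ, Fintype.card_fin]
    have hd : 0 < d := k.pos
    rw [Nat.cast_sub (by omega)]; norm_num
  have h3 := hodd k 3 ⟨1, by norm_num⟩
  have h5 := hodd k 5 ⟨2, by norm_num⟩
  have h7 := hodd k 7 ⟨3, by norm_num⟩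
  have hT0k : ∫ ω, (∑ i ∈ Finset.univ.erase k, Y i ω) ^ 0 ∂μ = 1 := by simp
  simp_rw [hsum]
  rw [key k _ hkerase 6 2 (by norm_num)]
  rw [hc] at e2 e4 e6
  simp only [Finset.sum_range_succ, Finset.sum_range_zero, Nat.reduceAdd, Nat.reduceSub]
  rw [hvar k, h3, hm4 k, h5, hm6 k, h7, hm8 k, e1, e2, e3, e4, e5, e6, hT0k]
  norm_num [Nat.choose]
  try ring
end
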